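/- arXiv:1711.05508 — 12 statements merged into one kernel-verified Lean document; each statement's English description precedes it below -/
import Mathlib

section
/- Let ⟨K,B,P,N⟩_R be a DPI. Then for every D ⊆ K: D is a minimal diagnosis w.r.t. the DPI if and only if D is a minimal hitting set of the collection of all minimal conflicts w.r.t. the DPI. -/
namespace KBDDiag

/-- A diagnosis problem instance (DPI) `⟨K,B,P,N⟩_R` over a Tarskian logic on sentences `L`. -/
structure DPI (L : Type*) where
  /-- the entailment relation of the logic -/
  entails : Set L → L → Prop
  /-- entailment is monotonic -/
  entails_mono : ∀ (X Y : Set L) (α : L), entails X α → entails (X ∪ Y) α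
  /-- entailment is idempotent -/
  entails_idem : ∀ (X A : Set L) (β : L),
    (∀ α ∈ A, entails X α) → entails (X ∪ A) β → entails X β
  /-- entailment is extensive -/
  entails_ext : ∀ (X : Set L) (α : L), α ∈ X → entails X α
  /-- the (possibly faulty) KB -/
  K : Set L
  /-- the background KB -/
  B : Set L
  /-- the positive test cases -/
  P : Set (Set L)
  /-- the negative test cases -/
  N : Set (Set L)
  /-- requirements: `r X` means the KB `X` satisfies requirement `r` -/
  R : Set (Set L → Prop)
  K_finite : K.Finite
  B_finite : B.Finite
  K_B_disjoint : K ∩ B = ∅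
  P_finite : P.Finite
  P_mem_finite : ∀ p ∈ P, Set.Finite p
  N_finite : N.Finite
  N_mem_finite : ∀ n ∈ N, Set.Finite n
  /-- violation of a requirement is monotone -/
  viol_mono : ∀ r ∈ R, ∀ X Y : Set L, X ⊆ Y → ¬ r X → ¬ r Y
  /-- requirements are preserved under adding entailed sentences -/
  sat_entailed : ∀ r ∈ R, ∀ X A : Set L, r X → (∀ α ∈ A, entails X α) → r (X ∪ A)
  /-- the background KB satisfies every requirement -/
  B_sat : ∀ r ∈ R, r B

namespace DPI

variable {L : Type*} (d : DPI L)

/-- `X ⊨ Y` : X entails every sentence of Y. -/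
def EntailsAll (X Y : Set L) : Prop := ∀ α ∈ Y, d.entails X α

/-- `U_P`, the union of all positive test cases. -/
def UP : Set L := ⋃₀ d.P

/-- `Ks` is a solution KB w.r.t. the DPI. -/
def IsSolutionKB (Ks : Set L) : Prop :=
  (∀ r ∈ d.R, r (Ks ∪ d.B)) ∧
  (∀ p ∈ d.P, d.EntailsAll (Ks ∪ d.B) p) ∧
  (∀ n ∈ d.N, ¬ d.EntailsAll (Ks ∪ d.B) n)

/-- `D` is a diagnosis w.r.t. the DPI. -/
def IsDiagnosis (D : Set L) : Prop :=
  D ⊆ d.K ∧ d.IsSolutionKB ((d.K \ D) ∪ d.UP)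

/-- `D` is a minimal diagnosis w.r.t. the DPI. -/
def IsMinDiagnosis (D : Set L) : Prop :=
  d.IsDiagnosis D ∧ ∀ D' ⊂ D, ¬ d.IsDiagnosis D'

/-- `C` is a conflict w.r.t. the DPI. -/
def IsConflict (C : Set L) : Prop :=
  C ⊆ d.K ∧ ¬ d.IsSolutionKB (C ∪ d.UP)

/-- `C` is a minimal conflict w.r.t. the DPI. -/
def IsMinConflict (C : Set L) : Prop :=
  d.IsConflict C ∧ ∀ C' ⊂ C, ¬ d.IsConflict C'

/-- `Ks` is a maximal solution KB w.r.t. the DPI. -/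
def IsMaxSolutionKB (Ks : Set L) : Prop :=
  d.IsSolutionKB Ks ∧ ¬ ∃ K' : Set L, d.IsSolutionKB K' ∧ Ks ∩ d.K ⊂ K' ∩ d.K

/-- `K*_i = (K \ D_i) ∪ B ∪ U_P`. -/
def Kstar (Di : Set L) : Set L := (d.K \ Di) ∪ d.B ∪ d.UP

/-- `X` violates some requirement in `R` or entails some negative test case. -/
def Violates (X : Set L) : Prop :=
  (∃ r ∈ d.R, ¬ r X) ∨ (∃ n ∈ d.N, d.EntailsAll X n)

/-- `dx(X)` w.r.t. the leading diagnoses `Ds`. -/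
def dxS (Ds : Set (Set L)) (X : Set L) : Set (Set L) :=
  {Di ∈ Ds | d.EntailsAll (d.Kstar Di) X}

/-- `dnx(X)` w.r.t. the leading diagnoses `Ds`. -/
def dnxS (Ds : Set (Set L)) (X : Set L) : Set (Set L) :=
  {Di ∈ Ds | d.Violates (d.Kstar Di ∪ X)}

/-- `dz(X)` w.r.t. the leading diagnoses `Ds`. -/
def dzS (Ds : Set (Set L)) (X : Set L) : Set (Set L) :=
  Ds \ (d.dxS Ds X ∪ d.dnxS Ds X)

/-- `Q` is a query w.r.t. the leading diagnoses `Ds`. -/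
def IsQuery (Ds : Set (Set L)) (Q : Set L) : Prop :=
  Q.Nonempty ∧ (d.dxS Ds Q).Nonempty ∧ (d.dnxS Ds Q).Nonempty

/-- The canonical query `Q_can(S) = (K \ U_S) ∩ (U_D \ I_D)` w.r.t. the seed `S`. -/
def Qcan (Ds S : Set (Set L)) : Set L := (d.K \ ⋃₀ S) ∩ (⋃₀ Ds \ ⋂₀ Ds)

/-- `⟨dxp, dnxp, ∅⟩` is a canonical q-partition of `Ds`. -/
def IsCanonicalQPartition (Ds dxp dnxp : Set (Set L)) : Prop :=
  dxp ∪ dnxp = Ds ∧ dxp ∩ dnxp = ∅ ∧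
  dxp.Nonempty ∧ dxp ⊂ Ds ∧
  (d.Qcan Ds dxp).Nonempty ∧
  d.dxS Ds (d.Qcan Ds dxp) = dxp ∧
  d.dnxS Ds (d.Qcan Ds dxp) = dnxp ∧
  d.dzS Ds (d.Qcan Ds dxp) = ∅

end DPI

/-- `Disc_D = U_D \ I_D`, the discrimination sentences w.r.t. `Ds`. -/
def Disc {L : Type*} (Ds : Set (Set L)) : Set L := ⋃₀ Ds \ ⋂₀ Ds

/-- `H` is a hitting set of the collection `S`. -/
def IsHittingSet {α : Type*} (S : Set (Set α)) (H : Set α) : Prop :=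
  H ⊆ ⋃₀ S ∧ ∀ s ∈ S, (H ∩ s).Nonempty

/-- `H` is a minimal hitting set of the collection `S`. -/
def IsMinHittingSet {α : Type*} (S : Set (Set α)) (H : Set α) : Prop :=
  IsHittingSet S H ∧ ∀ H' ⊂ H, ¬ IsHittingSet S H'

/-- `MHS S`, the set of all minimal hitting sets of `S`. -/
def MHS {α : Type*} (S : Set (Set α)) : Set (Set α) :=
  {H | IsMinHittingSet S H}


namespace DPI

variable {L : Type*} (d : DPI L)

lemma entails_mono' {X Y : Set L} {α : L} (h : X ⊆ Y) (hX : d.entails X α) :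
    d.entails Y α := by
  have := d.entails_mono X Y α hX
  rwa [Set.union_eq_self_of_subset_left h] at this

lemma violates_mono {X Y : Set L} (h : X ⊆ Y) (hX : d.Violates X) : d.Violates Y := by
  rcases hX with ⟨r, hr, hv⟩ | ⟨n, hn, he⟩
  · exact Or.inl ⟨r, hr, d.viol_mono r hr X Y h hv⟩
  · exact Or.inr ⟨n, hn, fun α hα => d.entails_mono' h (he α hα)⟩

lemma notSol_iff (X : Set L) :
    ¬ d.IsSolutionKB (X ∪ d.UP) ↔ d.Violates (X ∪ d.UP ∪ d.B) := by
  have hpos : ∀ p ∈ d.P, d.EntailsAll (X ∪ d.UP ∪ d.B) p := by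
    intro p hp α hα
    exact d.entails_ext _ α (Or.inl (Or.inr ⟨p, hp, hα⟩))
  constructor
  · intro h
    by_contra hv
    unfold Violates at hv
    push_neg at hv
    exact h ⟨fun r hr => hv.1 r hr, hpos,
      fun n hn => hv.2 n hn⟩
  · rintro (⟨r, hr, hv⟩ | ⟨n, hn, he⟩) ⟨h1, h2, h3⟩
    · exact hv (h1 r hr)
    · exact h3 n hn he

lemma conflict_mono {C C' : Set L} (hC : d.IsConflict C) (h : C ⊆ C') (hK : C' ⊆ d.K) :
    d.IsConflict C' := by
  refine ⟨hK, (d.notSol_iff C').mpr ?_⟩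
  exact d.violates_mono (by gcongr) ((d.notSol_iff C).mp hC.2)

lemma diag_iff_not_conflict {D : Set L} (hD : D ⊆ d.K) :
    d.IsDiagnosis D ↔ ¬ d.IsConflict (d.K \ D) := by
  unfold IsDiagnosis IsConflict
  constructor
  · rintro ⟨-, hsol⟩ ⟨-, hns⟩; exact hns hsol
  · intro h
    refine ⟨hD, ?_⟩
    by_contra hns
    exact h ⟨Set.diff_subset, hns⟩

lemma exists_min_conflict : ∀ C : Set L, d.IsConflict C → ∃ M, M ⊆ C ∧ d.IsMinConflict M := by
  have key : ∀ n : ℕ, ∀ C : Set L, C.ncard = n → d.IsConflict C →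
      ∃ M, M ⊆ C ∧ d.IsMinConflict M := by
    intro n
    induction n using Nat.strong_induction_on with
    | _ n ih =>
      intro C hcard hC
      by_cases h : ∀ C' ⊂ C, ¬ d.IsConflict C'
      · exact ⟨C, subset_rfl, hC, h⟩
      · push_neg at h
        obtain ⟨C', hsub, hC'⟩ := h
        have hfin : C.Finite := d.K_finite.subset hC.1
        have hlt : C'.ncard < n := hcard ▸ Set.ncard_lt_ncard hsub hfin
        obtain ⟨M, hM, hmin⟩ := ih _ hlt C' rfl hC'
        exact ⟨M, hM.trans hsub.subset, hmin⟩
  exact fun C hC => key C.ncard C rfl hC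

end DPI

/-- `D` is a minimal diagnosis iff `D` is a minimal hitting set of the
collection of all minimal conflicts. -/
theorem statement1 {L : Type*} (d : DPI L) (D : Set L) (hD : D ⊆ d.K) :
    d.IsMinDiagnosis D ↔ IsMinHittingSet {C : Set L | d.IsMinConflict C} D := by
  classical
  set S : Set (Set L) := {C : Set L | d.IsMinConflict C} with hS
  -- any set hitting all minimal conflicts hits all conflicts
  have hitsAll : ∀ X : Set L, (∀ s ∈ S, (X ∩ s).Nonempty) →
      ∀ C, d.IsConflict C → (X ∩ C).Nonempty := by
    intro X hX C hC
    obtain ⟨M, hMC, hMmin⟩ := d.exists_min_conflict C hC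
    obtain ⟨y, hy⟩ := hX M hMmin
    exact ⟨y, hy.1, hMC hy.2⟩
  -- X ⊆ K hits all conflicts iff K \ X is not a conflict
  have key : ∀ X : Set L, X ⊆ d.K →
      ((∀ C, d.IsConflict C → (X ∩ C).Nonempty) ↔ ¬ d.IsConflict (d.K \ X)) := by
    intro X hXK
    constructor
    · intro h hc
      obtain ⟨y, hy1, hy2⟩ := h _ hc
      exact hy2.2 hy1
    · intro h C hC
      by_contra hempty
      rw [Set.not_nonempty_iff_eq_empty] at hempty
      have hsub : C ⊆ d.K \ X := fun y hy =>
        ⟨hC.1 hy, fun hyX => (Set.eq_empty_iff_forall_notMem.mp hempty y) ⟨hyX, hy⟩⟩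
      exact h (d.conflict_mono hC hsub Set.diff_subset)
  have USK : ⋃₀ S ⊆ d.K := by
    rintro x ⟨C, hC, hxC⟩
    exact hC.1.1 hxC
  constructor
  · rintro ⟨⟨-, hsol⟩, hmin⟩
    have hnc : ¬ d.IsConflict (d.K \ D) := ((d.diag_iff_not_conflict hD).mp ⟨hD, hsol⟩)
    have hhitsC : ∀ C, d.IsConflict C → (D ∩ C).Nonempty := (key D hD).mpr hnc
    have hhits : ∀ s ∈ S, (D ∩ s).Nonempty := fun s hs => hhitsC s hs.1
    have hsubU : D ⊆ ⋃₀ S := by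
      intro x hx
      have hsub : D \ {x} ⊂ D := by
        constructor
        · exact Set.diff_subset
        · intro hle
          exact (hle hx).2 rfl
      have hnd : ¬ d.IsDiagnosis (D \ {x}) := hmin _ hsub
      have hDK' : D \ {x} ⊆ d.K := Set.diff_subset.trans hD
      have hconf : d.IsConflict (d.K \ (D \ {x})) := by
        by_contra hc
        exact hnd ((d.diag_iff_not_conflict hDK').mpr hc)
      obtain ⟨M, hMsub, hMmin⟩ := d.exists_min_conflict _ hconf
      obtain ⟨y, hyD, hyM⟩ := hhits M hMmin
      have : y = x := by
        by_contra hne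
        exact (hMsub hyM).2 ⟨hyD, hne⟩
      exact ⟨M, hMmin, this ▸ hyM⟩
    refine ⟨⟨hsubU, hhits⟩, ?_⟩
    rintro D' hD' ⟨hsub', hhits'⟩
    have hD'K : D' ⊆ d.K := hsub'.trans USK
    have : d.IsDiagnosis D' :=
      (d.diag_iff_not_conflict hD'K).mpr ((key D' hD'K).mp (hitsAll D' hhits'))
    exact hmin D' hD' this
  · rintro ⟨⟨hsubU, hhits⟩, hmin⟩
    have hdiag : d.IsDiagnosis D :=
      (d.diag_iff_not_conflict hD).mpr ((key D hD).mp (hitsAll D hhits))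
    refine ⟨hdiag, ?_⟩
    intro D' hD' hdiag'
    have hnc' : ¬ d.IsConflict (d.K \ D') := (d.diag_iff_not_conflict hdiag'.1).mp hdiag'
    have hhits' : ∀ C, d.IsConflict C → (D' ∩ C).Nonempty := (key D' hdiag'.1).mpr hnc'
    exact hmin D' hD' ⟨(hD'.subset).trans hsubU, fun s hs => hhits' s hs.1⟩

end KBDDiag
end

section
/- Let ⟨K,B,P,N⟩_R be a DPI. Then there exists a diagnosis w.r.t. the DPI if and only if B ∪ U_P satisfies every r ∈ R and B ∪ U_P ⊭ n for every n ∈ N. -/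
namespace KBDDiag

/-- A diagnosis exists iff `B ∪ U_P` satisfies every requirement and
entails no negative test case. -/
theorem statement2 {L : Type*} (d : DPI L) :
    (∃ D : Set L, d.IsDiagnosis D) ↔
      ((∀ r ∈ d.R, r (d.B ∪ d.UP)) ∧ ∀ n ∈ d.N, ¬ d.EntailsAll (d.B ∪ d.UP) n) := by
  constructor
  · rintro ⟨D, hDK, hR, hP, hN⟩
    have hsub : d.B ∪ d.UP ⊆ (d.K \ D) ∪ d.UP ∪ d.B := by
      intro x hx; rcases hx with hx | hx
      · exact Or.inr hx
      · exact Or.inl (Or.inr hx)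
    have heq : (d.K \ D) ∪ d.UP ∪ d.B = (d.B ∪ d.UP) ∪ (d.K \ D) := by
      ext x; simp [Set.mem_union]; tauto
    constructor
    · intro r hr
      by_contra hviol
      exact d.viol_mono r hr _ _ hsub hviol (hR r hr)
    · intro n hn hent
      refine hN n hn ?_
      intro α hα
      have := d.entails_mono (d.B ∪ d.UP) (d.K \ D) α (hent α hα)
      rwa [heq]
  · rintro ⟨hR, hN⟩
    refine ⟨d.K, subset_rfl, ?_, ?_, ?_⟩
    · intro r hr
      have : d.K \ d.K ∪ d.UP ∪ d.B = d.B ∪ d.UP := by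
        ext x; simp [Set.mem_union]; tauto
      rw [this]; exact hR r hr
    · intro p hp α hα
      exact d.entails_ext _ α (Or.inl (Or.inr ⟨p, hp, hα⟩))
    · intro n hn hent
      refine hN n hn ?_
      intro α hα
      have := hent α hα
      have heq : d.K \ d.K ∪ d.UP ∪ d.B = d.B ∪ d.UP := by
        ext x; simp [Set.mem_union]; tauto
      rwa [heq] at this


end KBDDiag
end

section
/- (Reduction of MBD to KBD.) Assume the relation symbol ab does not occur in any of the sentences beh(c_1),…,beh(c_n), nor in any sentence of SD_gen, OBS or U_MEAS; assume the sentences beh(c_1),…,beh(c_n) are pairwise distinct, the constant symbols c_1,…,c_n are pairwise distinct, and SD_gen ∪ OBS ∪ U_MEAS semantically entails c_i ≠ c_j for all i ≠ j. Define the KBD-DPI ⟨K,B,P,N⟩_R by K := {beh(c_i) : i = 1,…,n}, B := OBS ∪ SD_gen, P := MEAS, N := ∅ and R := {consistency}. Then for every index set I ⊆ {1,…,n}: the set D := {beh(c_i) : i ∈ I} is a KBD-diagnosis w.r.t. ⟨K,B,P,N⟩_R (i.e., {beh(c_j) : j ∉ I} ∪ OBS ∪ SD_gen ∪ U_MEAS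 is consistent) if and only if Δ := {c_i : i ∈ I} is an MBD-diagnosis for (SD, COMPS, OBS, MEAS). Consequently, D ↦ {c_i : beh(c_i) ∈ D} is a bijective correspondence between the KBD-diagnoses w.r.t. ⟨K,B,P,N⟩_R and the MBD-diagnoses for (SD, COMPS, OBS, MEAS). -/
namespace MBDReduction

open FirstOrder FirstOrder.Language

/-- The language consisting of a single unary relation symbol `ab` (and nothing else). -/
def abLang : FirstOrder.Language where
  Functions := fun _ => Empty
  Relations := fun n => match n with
    | 1 => Unit
    | _ => Empty

variable (L₀ : FirstOrder.Language)

/-- The extension of the base language `L₀` (in which `ab` does not occur) by the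
relation symbol `ab`. -/
def LL : FirstOrder.Language := L₀.sum abLang

/-- The relation symbol `ab`. -/
def ab : (LL L₀).Relations 1 := Sum.inr Unit.unit

/-- Lifting of `L₀`-sentences (which hence do not contain `ab`) to the extended language. -/
def lift : L₀.Sentence → (LL L₀).Sentence := (LHom.sumInl (L' := abLang)).onSentence

/-- The constant symbol `t` of `L₀` viewed as a term of the extended language. -/
def constT (t : L₀.Constants) : (LL L₀).Term Empty :=
  Constants.term (Sum.inl t)

/-- The sentence `ab(t)` for a constant symbol `t` of `L₀`. -/
def abOf (t : L₀.Constants) : (LL L₀).Sentence :=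
  Relations.formula₁ (ab L₀) (constT L₀ t)

section Aux

/-- Retraction of `LHom.onTerm` of `sumInl`. -/
def downTerm {L : FirstOrder.Language} {α : Type*} : (LL L).Term α → L.Term α
  | .var x => .var x
  | .func (Sum.inl f) ts => .func f fun i => downTerm (ts i)
  | .func (Sum.inr f) _ => f.elim

theorem downTerm_onTerm {L : FirstOrder.Language} {α : Type*} (t : L.Term α) :
    downTerm ((LHom.sumInl (L' := abLang)).onTerm t) = t := by
  induction t with
  | var x => rfl
  | func f ts ih =>
    simp only [LHom.onTerm, downTerm]
    exact congrArg _ (funext fun i => ih i)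

/-- Retraction of `LHom.onBoundedFormula` of `sumInl`. -/
def downBF {L : FirstOrder.Language} {α : Type*} :
    ∀ {k : ℕ}, (LL L).BoundedFormula α k → L.BoundedFormula α k
  | _, .falsum => .falsum
  | _, .equal t₁ t₂ => .equal (downTerm t₁) (downTerm t₂)
  | _, .rel (Sum.inl R) ts => .rel R fun i => downTerm (ts i)
  | _, .rel (Sum.inr _) _ => .falsum
  | _, .imp f₁ f₂ => .imp (downBF f₁) (downBF f₂)
  | _, .all f => .all (downBF f)

theorem downBF_onBoundedFormula {L : FirstOrder.Language} {α : Type*} :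
    ∀ {k : ℕ} (f : L.BoundedFormula α k),
      downBF ((LHom.sumInl (L' := abLang)).onBoundedFormula f) = f := by
  intro k f
  induction f with
  | falsum => rfl
  | equal t₁ t₂ => simp [LHom.onBoundedFormula, downBF, downTerm_onTerm, Term.bdEqual]
  | rel R ts =>
    simp only [LHom.onBoundedFormula, downBF, Relations.boundedFormula]
    exact congrArg _ (funext fun i => downTerm_onTerm _)
  | imp f₁ f₂ ih₁ ih₂ => simp [LHom.onBoundedFormula, downBF, ih₁, ih₂]
  | all f ih => simp [LHom.onBoundedFormula, downBF, ih]

theorem lift_injective {L : FirstOrder.Language} : Function.Injective (lift L) := by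
  intro a b h
  have := congrArg downBF h
  rwa [show lift L a = (LHom.sumInl (L' := abLang)).onBoundedFormula a from rfl,
    show lift L b = (LHom.sumInl (L' := abLang)).onBoundedFormula b from rfl,
    downBF_onBoundedFormula, downBF_onBoundedFormula] at this

theorem rdiff {ι : Type*} {X : Type*} (g : ι → X) (hginj : Function.Injective g)
    (S : Set ι) : Set.range g \ g '' S = g '' Sᶜ := by
  rw [← Set.image_univ, ← Set.image_diff hginj, Set.compl_eq_univ_diff]

/-- An `abLang`-structure interpreting `ab` as the predicate `p`. -/
def abStruct {M : Type*} (p : M → Prop) : abLang.Structure M where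
  funMap := fun {_} f _ => f.elim
  RelMap := fun {k} R => match k, R with
    | 1, _ => fun xs => p (xs 0)
    | 0, r => r.elim
    | _+2, r => r.elim

end Aux

universe u v

theorem mbd_model {L : FirstOrder.Language.{u, v}} {n : ℕ} {c : Fin n → L.Constants}
    {beh : Fin n → L.Sentence} {SDgen OBS : Set L.Sentence} {MEAS : Set (Set L.Sentence)}
    (hdist : ∀ i j : Fin n, i ≠ j → Theory.ModelsBoundedFormula (SDgen ∪ OBS ∪ ⋃₀ MEAS)
        ((Term.equal (Constants.term (c i)) (Constants.term (c j)) : L.Formula Empty).not))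
    {I : Set (Fin n)} (N : Type (max u v)) [Nonempty N] [L.Structure N]
    (hN : N ⊨ (beh '' Iᶜ ∪ OBS ∪ SDgen ∪ ⋃₀ MEAS : L.Theory)) :
    Theory.IsSatisfiable
        ((Set.range fun i : Fin n => ((abOf L (c i)).not).imp (lift L (beh i))) ∪
          lift L '' SDgen ∪ ((fun i : Fin n => abOf L (c i)) '' I) ∪
          ((fun i : Fin n => (abOf L (c i)).not) '' Iᶜ) ∪
          lift L '' OBS ∪ lift L '' ⋃₀ MEAS) := by
  have hne : ∀ i j : Fin n, i ≠ j →
      (constantMap (c i) : N) ≠ constantMap (c j) := by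
    intro i j hij
    haveI : N ⊨ (SDgen ∪ OBS ∪ ⋃₀ MEAS : L.Theory) :=
      hN.mono (by intro x hx; simp only [Set.mem_union] at hx ⊢; tauto)
    intro heq
    have h := hdist i j hij ⟨N⟩ default default
    rw [BoundedFormula.realize_not] at h
    apply h
    show ((Constants.term (c i)).equal (Constants.term (c j)) : L.Formula Empty).Realize
      (default : Empty → N)
    rw [Formula.realize_equal, Term.realize_constants, Term.realize_constants]
    exact heq
  letI SA : abLang.Structure N := abStruct (fun x => ∃ i ∈ I, x = constantMap (c i))
  letI SLL : (LL L).Structure N := inferInstanceAs ((L.sum abLang).Structure N)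
  haveI hexp : (LHom.sumInl : L →ᴸ LL L).IsExpansionOn N :=
    inferInstanceAs ((LHom.sumInl : L →ᴸ L.sum abLang).IsExpansionOn N)
  have habOf : ∀ t : L.Constants,
      ((abOf L t).Realize N ↔
        ∃ i ∈ I, (constantMap t : N) = constantMap (c i)) := by
    intro t
    simp only [abOf, constT, Sentence.Realize, Formula.realize_rel₁, Term.realize_constants]
    show (∃ i ∈ I, (![(Term.realize default (Constants.term (L := LL L) (Sum.inl t)) : N)]) 0 = constantMap (c i)) ↔ _
    simp only [Matrix.cons_val_zero]
    exact exists_congr fun i => and_congr Iff.rfl (by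
      have e : Term.realize (default : Empty → N) (Constants.term (L := LL L) (Sum.inl t)) =
          (constantMap t : N) := Term.realize_constants
      rw [e])
  have hlift : ∀ ψ : L.Sentence, ψ.Realize N → (lift L ψ).Realize N := by
    intro ψ hψ
    exact ((LHom.sumInl (L' := abLang)).realize_onSentence (M := N) ψ).2 hψ
  haveI hmodel : N ⊨
      ((Set.range fun i : Fin n => ((abOf L (c i)).not).imp (lift L (beh i))) ∪
          lift L '' SDgen ∪ ((fun i : Fin n => abOf L (c i)) '' I) ∪
          ((fun i : Fin n => (abOf L (c i)).not) '' Iᶜ) ∪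
          lift L '' OBS ∪ lift L '' ⋃₀ MEAS) := by
    rw [Theory.model_iff]
    intro φ hφ
    simp only [Set.mem_union] at hφ
    rcases hφ with ((((h | h) | h) | h) | h) | h
    · obtain ⟨i, rfl⟩ := h
      rw [Sentence.Realize, Formula.realize_imp, Formula.realize_not]
      intro hnab
      by_cases hi : i ∈ I
      · exact absurd ((habOf (c i)).2 ⟨i, hi, rfl⟩) hnab
      · exact hlift (beh i) (hN.realize_of_mem _
          (Set.mem_union_left _ (Set.mem_union_left _ (Set.mem_union_left _ ⟨i, hi, rfl⟩))))
    · obtain ⟨ψ, hψ, rfl⟩ := h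
      exact hlift ψ (hN.realize_of_mem _
        (Set.mem_union_left _ (Set.mem_union_right _ hψ)))
    · obtain ⟨i, hi, rfl⟩ := h
      exact (habOf (c i)).2 ⟨i, hi, rfl⟩
    · obtain ⟨i, hi, rfl⟩ := h
      rw [Sentence.Realize, Formula.realize_not]
      intro hab
      obtain ⟨j, hj, heq⟩ := (habOf (c i)).1 hab
      exact hne i j (fun e => hi (e ▸ hj)) heq
    · obtain ⟨ψ, hψ, rfl⟩ := h
      exact hlift ψ (hN.realize_of_mem _
        (Set.mem_union_left _ (Set.mem_union_left _ (Set.mem_union_right _ hψ))))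
    · obtain ⟨ψ, hψ, rfl⟩ := h
      exact hlift ψ (hN.realize_of_mem _ (Set.mem_union_right _ hψ))
  exact Theory.Model.isSatisfiable N



theorem key {L : FirstOrder.Language.{u, v}} {n : ℕ} {c : Fin n → L.Constants}
    {beh : Fin n → L.Sentence} {SDgen OBS : Set L.Sentence} {MEAS : Set (Set L.Sentence)}
    (hdist : ∀ i j : Fin n, i ≠ j →
      Theory.ModelsBoundedFormula (SDgen ∪ OBS ∪ ⋃₀ MEAS)
        ((Term.equal (Constants.term (c i)) (Constants.term (c j)) : L.Formula Empty).not))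
    (I : Set (Fin n)) :
    Theory.IsSatisfiable
        ((lift L '' (beh '' Iᶜ)) ∪ lift L '' OBS ∪ lift L '' SDgen ∪
          lift L '' ⋃₀ MEAS)
      ↔
    Theory.IsSatisfiable
        ((Set.range fun i : Fin n => ((abOf L (c i)).not).imp (lift L (beh i))) ∪
          lift L '' SDgen ∪
          ((fun i : Fin n => abOf L (c i)) '' I) ∪
          ((fun i : Fin n => (abOf L (c i)).not) '' Iᶜ) ∪
          lift L '' OBS ∪ lift L '' ⋃₀ MEAS) := by
  constructor
  · rintro ⟨M⟩
    letI : (L.sum abLang).Structure M := inferInstanceAs ((LL L).Structure M)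
    letI S0 : L.Structure M := (LHom.sumInl (L' := abLang)).reduct M
    haveI hexp : (LHom.sumInl : L →ᴸ LL L).IsExpansionOn M :=
      LHom.isExpansionOn_reduct _ _
    have hM0 : M ⊨ (beh '' Iᶜ ∪ OBS ∪ SDgen ∪ ⋃₀ MEAS : L.Theory) := by
      rw [Theory.model_iff]
      intro φ hφ
      have hmem : lift L φ ∈
          ((lift L '' (beh '' Iᶜ)) ∪ lift L '' OBS ∪ lift L '' SDgen ∪
            lift L '' ⋃₀ MEAS) := by
        simp only [Set.mem_union] at hφ ⊢
        rcases hφ with ((h | h) | h) | h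
        · exact Or.inl (Or.inl (Or.inl ⟨φ, h, rfl⟩))
        · exact Or.inl (Or.inl (Or.inr ⟨φ, h, rfl⟩))
        · exact Or.inl (Or.inr ⟨φ, h, rfl⟩)
        · exact Or.inr ⟨φ, h, rfl⟩
      have := M.is_model.realize_of_mem _ hmem
      exact ((LHom.sumInl (L' := abLang)).realize_onSentence (M := M) φ).1 this
    exact mbd_model hdist M hM0
  · rintro ⟨M⟩
    haveI hmodel : M ⊨
        ((lift L '' (beh '' Iᶜ)) ∪ lift L '' OBS ∪ lift L '' SDgen ∪
          lift L '' ⋃₀ MEAS) := by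
      rw [Theory.model_iff]
      intro φ hφ
      simp only [Set.mem_union] at hφ
      rcases hφ with ((h | h) | h) | h
      · obtain ⟨x, ⟨j, hj, rfl⟩, rfl⟩ := h
        have himp : M ⊨ ((abOf L (c j)).not).imp (lift L (beh j)) :=
          M.is_model.realize_of_mem _
            (Set.mem_union_left _ (Set.mem_union_left _ (Set.mem_union_left _
              (Set.mem_union_left _ (Set.mem_union_left _ ⟨j, rfl⟩)))))
        have hnab : M ⊨ (abOf L (c j)).not :=
          M.is_model.realize_of_mem _
            (Set.mem_union_left _ (Set.mem_union_left _ (Set.mem_union_right _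
              ⟨j, hj, rfl⟩)))
        exact Formula.realize_imp.1 himp hnab
      · exact M.is_model.realize_of_mem _
          (Set.mem_union_left _ (Set.mem_union_right _ h))
      · exact M.is_model.realize_of_mem _
          (Set.mem_union_left _ (Set.mem_union_left _ (Set.mem_union_left _
            (Set.mem_union_left _ (Set.mem_union_right _ h)))))
      · exact M.is_model.realize_of_mem _ (Set.mem_union_right _ h)
    exact Theory.Model.isSatisfiable M


/-- Reduction of MBD to KBD: given a system with components `c 1, …, c n`
whose nominal behaviours are described by the `ab`-free sentences `beh 1, …, beh n`,
general `ab`-free system axioms `SDgen`, observations `OBS` and measurements `MEAS`,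
for every index set `I`, `{beh i : i ∈ I}` is a KBD-diagnosis w.r.t. the KBD-DPI
`⟨K,B,P,N⟩_R = ⟨{beh i : i}, OBS ∪ SDgen, MEAS, ∅⟩_{consistency}` (i.e.,
`{beh j : j ∉ I} ∪ OBS ∪ SDgen ∪ ⋃₀ MEAS` is consistent) iff `{c i : i ∈ I}` is an
MBD-diagnosis for `(SD, COMPS, OBS, MEAS)`; consequently
`D ↦ {c i : beh i ∈ D}` is a bijection between KBD-diagnoses and MBD-diagnoses. -/
theorem statement4 {n : ℕ}
    (c : Fin n → L₀.Constants) (hc : Function.Injective c)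
    (beh : Fin n → L₀.Sentence) (hbeh : Function.Injective beh)
    (SDgen OBS : Set L₀.Sentence) (hSDgen : SDgen.Finite) (hOBS : OBS.Finite)
    (MEAS : Set (Set L₀.Sentence)) (hMEAS : MEAS.Finite)
    (hMEASmem : ∀ m ∈ MEAS, m.Finite)
    (hdist : ∀ i j : Fin n, i ≠ j →
      Theory.ModelsBoundedFormula (SDgen ∪ OBS ∪ ⋃₀ MEAS)
        ((Term.equal (Constants.term (c i)) (Constants.term (c j)) : L₀.Formula Empty).not)) :
    (∀ I : Set (Fin n),
        Theory.IsSatisfiable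
            ((lift L₀ '' (beh '' Iᶜ)) ∪ lift L₀ '' OBS ∪ lift L₀ '' SDgen ∪
              lift L₀ '' ⋃₀ MEAS)
          ↔
        Theory.IsSatisfiable
            ((Set.range fun i : Fin n => ((abOf L₀ (c i)).not).imp (lift L₀ (beh i))) ∪
              lift L₀ '' SDgen ∪
              ((fun i : Fin n => abOf L₀ (c i)) '' I) ∪
              ((fun i : Fin n => (abOf L₀ (c i)).not) '' Iᶜ) ∪
              lift L₀ '' OBS ∪ lift L₀ '' ⋃₀ MEAS)) ∧
    Set.BijOn
      (fun D : Set ((LL L₀).Sentence) => c '' {i : Fin n | lift L₀ (beh i) ∈ D})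
      {D : Set ((LL L₀).Sentence) |
        D ⊆ lift L₀ '' Set.range beh ∧
        Theory.IsSatisfiable
          ((lift L₀ '' Set.range beh \ D) ∪ lift L₀ '' OBS ∪ lift L₀ '' SDgen ∪
            lift L₀ '' ⋃₀ MEAS)}
      {Δ : Set L₀.Constants |
        Δ ⊆ Set.range c ∧
        Theory.IsSatisfiable
          ((Set.range fun i : Fin n => ((abOf L₀ (c i)).not).imp (lift L₀ (beh i))) ∪
            lift L₀ '' SDgen ∪
            (abOf L₀ '' Δ) ∪
            ((fun t => (abOf L₀ t).not) '' (Set.range c \ Δ)) ∪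
            lift L₀ '' OBS ∪ lift L₀ '' ⋃₀ MEAS)} := by
  have hg : Function.Injective (fun i : Fin n => lift L₀ (beh i)) :=
    fun a b h => hbeh (lift_injective h)
  have hrange : lift L₀ '' Set.range beh = Set.range (fun i : Fin n => lift L₀ (beh i)) :=
    (Set.range_comp _ _).symm
  have claim1 : ∀ D : Set ((LL L₀).Sentence),
      Set.range (fun i : Fin n => lift L₀ (beh i)) \ D
        = (fun i : Fin n => lift L₀ (beh i)) '' {i : Fin n | lift L₀ (beh i) ∈ D}ᶜ := by
    intro D
    ext x
    constructor
    · rintro ⟨⟨i, rfl⟩, hxD⟩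
      exact ⟨i, hxD, rfl⟩
    · rintro ⟨i, hiD, rfl⟩
      exact ⟨⟨i, rfl⟩, hiD⟩
  have claim2 : ∀ D : Set ((LL L₀).Sentence),
      D ⊆ Set.range (fun i : Fin n => lift L₀ (beh i)) →
      D = (fun i : Fin n => lift L₀ (beh i)) '' {i : Fin n | lift L₀ (beh i) ∈ D} := by
    intro D hD
    ext x
    constructor
    · intro hx
      obtain ⟨i, rfl⟩ := hD hx
      exact ⟨i, hx, rfl⟩
    · rintro ⟨i, hi, rfl⟩
      exact hi
  refine ⟨fun I => key hdist I, ?_, ?_, ?_⟩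
  · -- MapsTo
    rintro D ⟨hD, hsat⟩
    set I : Set (Fin n) := {i : Fin n | lift L₀ (beh i) ∈ D} with hIdef
    refine ⟨Set.image_subset_range c I, ?_⟩
    have h1 : lift L₀ '' Set.range beh \ D = lift L₀ '' (beh '' Iᶜ) := by
      rw [hrange, claim1 D]
      exact (Set.image_image _ _ _).symm
    rw [h1] at hsat
    have hmbd := (key hdist I).1 hsat
    have e1 : abOf L₀ '' (c '' I) = (fun i : Fin n => abOf L₀ (c i)) '' I :=
      Set.image_image _ _ _
    have e2 : (fun t => (abOf L₀ t).not) '' (Set.range c \ c '' I)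
        = (fun i : Fin n => (abOf L₀ (c i)).not) '' Iᶜ := by
      rw [rdiff c hc I]
      exact Set.image_image _ _ _
    rw [e1, e2]
    exact hmbd
  · -- InjOn
    rintro D₁ ⟨hD₁, -⟩ D₂ ⟨hD₂, -⟩ heq
    have hI : {i : Fin n | lift L₀ (beh i) ∈ D₁} = {i : Fin n | lift L₀ (beh i) ∈ D₂} :=
      (Set.image_injective.2 hc) heq
    rw [claim2 D₁ (hrange ▸ hD₁), claim2 D₂ (hrange ▸ hD₂), hI]
  · -- SurjOn
    rintro Δ ⟨hΔ, hsat⟩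
    set I : Set (Fin n) := {i : Fin n | c i ∈ Δ} with hIdef
    have hcI : c '' I = Δ := by
      apply Set.Subset.antisymm
      · rintro x ⟨i, hi, rfl⟩
        exact hi
      · intro x hx
        obtain ⟨i, rfl⟩ := hΔ hx
        exact ⟨i, hx, rfl⟩
    have hIg : {i : Fin n | lift L₀ (beh i) ∈ (fun i : Fin n => lift L₀ (beh i)) '' I} = I := by
      ext i
      constructor
      · rintro ⟨j, hj, hji⟩
        rwa [← hg hji]
      · intro hi
        exact ⟨i, hi, rfl⟩
    refine ⟨lift L₀ '' (beh '' I), ⟨?_, ?_⟩, ?_⟩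
    · exact Set.image_mono (Set.image_subset_range beh I)
    · have h2 : lift L₀ '' Set.range beh \ lift L₀ '' (beh '' I) = lift L₀ '' (beh '' Iᶜ) := by
        rw [hrange, Set.image_image, rdiff _ hg I]
        exact (Set.image_image _ _ _).symm
      rw [h2]
      rw [← hcI, Set.image_image, rdiff c hc I, Set.image_image] at hsat
      exact (key hdist I).2 hsat
    · show c '' {i : Fin n | lift L₀ (beh i) ∈ lift L₀ '' (beh '' I)} = Δ
      rw [Set.image_image, hIg]
      exact hcI


end MBDReduction
end

section
/- Let ⟨K,B,P,N⟩_R be a DPI, D a set of minimal diagnoses w.r.t. it, and X ⊆ L any set of sentences. Then ⟨dx(X), dnx(X), dz(X)⟩ is a partition of D: the three sets are pairwise disjoint and their union equals D (in particular, dx(X) ∩ dnx(X) = ∅). -/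
namespace KBDDiag

/-- `⟨dx(X), dnx(X), dz(X)⟩` is a partition of the leading diagnoses `Ds`. -/
theorem statement5 {L : Type*} (d : DPI L) (Ds : Set (Set L))
    (hDs : ∀ Di ∈ Ds, d.IsMinDiagnosis Di) (X : Set L) :
    d.dxS Ds X ∩ d.dnxS Ds X = ∅ ∧
    d.dxS Ds X ∩ d.dzS Ds X = ∅ ∧
    d.dnxS Ds X ∩ d.dzS Ds X = ∅ ∧
    d.dxS Ds X ∪ d.dnxS Ds X ∪ d.dzS Ds X = Ds := by
  have hKeq : ∀ Di : Set L, d.Kstar Di = ((d.K \ Di) ∪ d.UP) ∪ d.B := by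
    intro Di
    simp only [DPI.Kstar]
    rw [Set.union_assoc, Set.union_comm d.B, ← Set.union_assoc]
  have key : d.dxS Ds X ∩ d.dnxS Ds X = ∅ := by
    ext Di
    simp only [Set.mem_inter_iff, Set.mem_empty_iff_false, iff_false]
    rintro ⟨hdx, hdnx⟩
    obtain ⟨hmem, hent⟩ : Di ∈ Ds ∧ d.EntailsAll (d.Kstar Di) X := hdx
    obtain ⟨-, hviol⟩ : Di ∈ Ds ∧ d.Violates (d.Kstar Di ∪ X) := hdnx
    obtain ⟨⟨hsub, hsolR, hsolP, hsolN⟩, -⟩ := hDs Di hmem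
    rw [← hKeq] at hsolR hsolN
    rcases hviol with ⟨r, hr, hnr⟩ | ⟨n, hn, hentn⟩
    · exact hnr (d.sat_entailed r hr _ X (hsolR r hr) hent)
    · refine hsolN n hn ?_
      intro β hβ
      exact d.entails_idem _ X β hent (hentn β hβ)
  refine ⟨key, ?_, ?_, ?_⟩
  · ext Di
    simp only [Set.mem_inter_iff, Set.mem_empty_iff_false, iff_false, not_and,
      DPI.dzS, Set.mem_diff, Set.mem_union]
    tauto
  · ext Di
    simp only [Set.mem_inter_iff, Set.mem_empty_iff_false, iff_false, not_and,
      DPI.dzS, Set.mem_diff, Set.mem_union]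
    tauto
  · ext Di
    simp only [Set.mem_union, DPI.dzS, Set.mem_diff]
    constructor
    · rintro ((h | h) | h)
      · exact h.1
      · exact h.1
      · exact h.1
    · intro h
      by_cases hx : Di ∈ d.dxS Ds X ∪ d.dnxS Ds X
      · rcases hx with hx | hx
        · exact Or.inl (Or.inl hx)
        · exact Or.inl (Or.inr hx)
      · exact Or.inr ⟨h, hx⟩

end KBDDiag
end

section
/- Let ⟨K,B,P,N⟩_R be a DPI, D a set of minimal diagnoses w.r.t. it, and Q a query w.r.t. D with Q ⊆ K. Then dz(Q) = ∅. -/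
namespace KBDDiag

/-- For a query `Q ⊆ K` w.r.t. `Ds`, `dz(Q) = ∅`. -/
theorem statement7 {L : Type*} (d : DPI L) (Ds : Set (Set L))
    (hDs : ∀ Di ∈ Ds, d.IsMinDiagnosis Di)
    (Q : Set L) (hQK : Q ⊆ d.K) (hQ : d.IsQuery Ds Q) :
    d.dzS Ds Q = ∅ := by
  ext Di
  simp only [Set.mem_empty_iff_false, iff_false, DPI.dzS, Set.mem_diff, Set.mem_union,
    not_and, not_not]
  intro hDi
  by_contra hnot
  rw [not_or] at hnot
  obtain ⟨hnx, hnnx⟩ := hnot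
  obtain ⟨⟨hDiK, hsol⟩, hminimal⟩ := hDs Di hDi
  -- Di is not in dnx(Q), so Kstar Di ∪ Q does not violate
  have hnviol : ¬ d.Violates (d.Kstar Di ∪ Q) := by
    intro hv; exact hnnx ⟨hDi, hv⟩
  rw [DPI.Violates, not_or] at hnviol
  obtain ⟨hvR, hvN⟩ := hnviol
  push_neg at hvR hvN
  -- key set identity
  have hset : ((d.K \ (Di \ Q)) ∪ d.UP) ∪ d.B = d.Kstar Di ∪ Q := by
    ext x
    have hx := @hQK x
    simp only [DPI.Kstar, Set.mem_union, Set.mem_diff]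
    tauto
  -- Di \ Q is a diagnosis
  have hdiag : d.IsDiagnosis (Di \ Q) := by
    refine ⟨(Set.diff_subset).trans hDiK, ?_, ?_, ?_⟩
    · intro r hr
      rw [hset]
      exact hvR r hr
    · intro p hp α hα
      apply d.entails_ext
      rw [hset]
      left; right
      exact ⟨p, hp, hα⟩
    · intro n hn hent
      refine hvN n hn ?_
      intro α hα
      rw [← hset]
      exact hent α hα
  -- by minimality, Di \ Q = Di, so Q ∩ Di = ∅
  have heq : Di \ Q = Di := by
    by_contra hne
    exact hminimal (Di \ Q) (Set.ssubset_iff_subset_ne.mpr ⟨Set.diff_subset, hne⟩) hdiag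
  -- hence Q ⊆ Kstar Di, so Di ∈ dx(Q)
  apply hnx
  refine ⟨hDi, fun α hα => d.entails_ext _ _ ?_⟩
  left; left
  refine ⟨hQK hα, fun hαDi => ?_⟩
  rw [← heq] at hαDi
  exact hαDi.2 hα

end KBDDiag
end

section
/- Let ⟨K,B,P,N⟩_R be a DPI, D a set of minimal diagnoses w.r.t. it, and Q a query w.r.t. D with Q ⊆ K. Then for every diagnosis D' ∈ D: D' ∈ dx(Q) if and only if K \ D' ⊇ Q, and D' ∈ dnx(Q) if and only if K \ D' ⊉ Q. -/
namespace KBDDiag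

lemma aux_union_eq {L : Type*} (d : DPI L) (Di Q : Set L) (hDiK : Di ⊆ d.K) :
    ((d.K \ (Di \ Q)) ∪ d.UP) ∪ d.B = d.Kstar Di ∪ (Di ∩ Q) := by
  ext x
  simp only [DPI.Kstar, Set.mem_union, Set.mem_diff, Set.mem_inter_iff]
  have h := @hDiK x
  tauto

lemma aux_kstar_eq {L : Type*} (d : DPI L) (Di : Set L) :
    ((d.K \ Di) ∪ d.UP) ∪ d.B = d.Kstar Di := by
  ext x
  simp only [DPI.Kstar, Set.mem_union]
  tauto

/-- For a query `Q ⊆ K` w.r.t. `Ds` and any `Di ∈ Ds`: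
`Di ∈ dx(Q)` iff `K \ Di ⊇ Q`, and `Di ∈ dnx(Q)` iff `K \ Di ⊉ Q`. -/
theorem statement8 {L : Type*} (d : DPI L) (Ds : Set (Set L))
    (hDs : ∀ Di ∈ Ds, d.IsMinDiagnosis Di)
    (Q : Set L) (hQK : Q ⊆ d.K) (hQ : d.IsQuery Ds Q) :
    ∀ Di ∈ Ds,
      (Di ∈ d.dxS Ds Q ↔ Q ⊆ d.K \ Di) ∧
      (Di ∈ d.dnxS Ds Q ↔ ¬ Q ⊆ d.K \ Di) := by
  intro Di hDi
  obtain ⟨⟨hDiK, hSol⟩, hMin⟩ := hDs Di hDi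
  unfold DPI.IsSolutionKB at hSol
  rw [aux_kstar_eq] at hSol
  obtain ⟨hR, hP, hN⟩ := hSol
  -- If Q ⊆ K \ Di, then Kstar Di ∪ Q = Kstar Di.
  have habs : Q ⊆ d.K \ Di → d.Kstar Di ∪ Q = d.Kstar Di := by
    intro h
    apply Set.union_eq_self_of_subset_right
    intro x hx
    exact Or.inl (Or.inl (h hx))
  -- backward for dx
  have hdx_of_sub : Q ⊆ d.K \ Di → Di ∈ d.dxS Ds Q := by
    intro h
    refine ⟨hDi, fun α hα => d.entails_ext _ _ ?_⟩
    exact Or.inl (Or.inl (h hα))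
  -- not violating when Q ⊆ K \ Di
  have hnotviol : Q ⊆ d.K \ Di → ¬ Di ∈ d.dnxS Ds Q := by
    intro h hmem
    obtain ⟨-, hv⟩ := hmem
    rw [habs h] at hv
    rcases hv with ⟨r, hr, hnr⟩ | ⟨n, hn, he⟩
    · exact hnr (hR r hr)
    · exact hN n hn he
  -- key: if ¬ Q ⊆ K \ Di and Kstar Di ⊨ Q then Di \ Q is a smaller diagnosis
  have hkey : ¬ Q ⊆ d.K \ Di → d.EntailsAll (d.Kstar Di) Q → False := by
    intro hns hent
    have hA : ∀ α ∈ Di ∩ Q, d.entails (d.Kstar Di) α := fun α hα => hent α hα.2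
    have heq := aux_union_eq d Di Q hDiK
    have hss : Di \ Q ⊂ Di := by
      obtain ⟨α, hαQ, hαn⟩ := Set.not_subset.mp hns
      have hαDi : α ∈ Di := by
        by_contra h
        exact hαn ⟨hQK hαQ, h⟩
      refine ⟨Set.diff_subset, fun h => ?_⟩
      exact (h hαDi).2 hαQ
    refine hMin (Di \ Q) hss ⟨Set.diff_subset.trans hDiK, ?_⟩
    refine ⟨?_, ?_, ?_⟩
    · intro r hr
      rw [heq]
      exact d.sat_entailed r hr _ _ (hR r hr) hA
    · intro p hp α hα
      rw [heq]
      exact d.entails_mono _ _ _ (hP p hp α hα)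
    · intro n hn he
      apply hN n hn
      intro β hβ
      refine d.entails_idem _ (Di ∩ Q) β hA ?_
      have := he β hβ
      rwa [heq] at this
  -- key2: if ¬ Q ⊆ K \ Di then Di ∈ dnx
  have hdnx : ¬ Q ⊆ d.K \ Di → Di ∈ d.dnxS Ds Q := by
    intro hns
    refine ⟨hDi, ?_⟩
    have hss : Di \ Q ⊂ Di := by
      obtain ⟨α, hαQ, hαn⟩ := Set.not_subset.mp hns
      have hαDi : α ∈ Di := by
        by_contra h
        exact hαn ⟨hQK hαQ, h⟩
      refine ⟨Set.diff_subset, fun h => ?_⟩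
      exact (h hαDi).2 hαQ
    have hnd := hMin (Di \ Q) hss
    have heq := aux_union_eq d Di Q hDiK
    have hsubQ : d.Kstar Di ∪ (Di ∩ Q) ⊆ d.Kstar Di ∪ Q := by
      intro x hx
      rcases hx with h | h
      · exact Or.inl h
      · exact Or.inr h.2
    have hUQ : d.Kstar Di ∪ (Di ∩ Q) ∪ Q = d.Kstar Di ∪ Q := by
      ext x
      simp only [Set.mem_union, Set.mem_inter_iff]
      tauto
    by_contra hv
    apply hnd
    refine ⟨Set.diff_subset.trans hDiK, ?_, ?_, ?_⟩
    · intro r hr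
      rw [heq]
      by_contra hnr
      exact hv (Or.inl ⟨r, hr, d.viol_mono r hr _ _ hsubQ hnr⟩)
    · intro p hp α hα
      apply d.entails_ext
      exact Or.inl (Or.inr ⟨p, hp, hα⟩)
    · intro n hn he
      apply hv
      refine Or.inr ⟨n, hn, fun β hβ => ?_⟩
      have := he β hβ
      rw [heq] at this
      have := d.entails_mono _ Q _ this
      rwa [hUQ] at this
  constructor
  · constructor
    · intro hmem
      by_contra hns
      exact hkey hns hmem.2
    · exact hdx_of_sub
  · constructor
    · intro hmem
      by_contra hns
      exact hnotviol hns hmem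
    · exact hdnx

end KBDDiag
end

section
/- Let ⟨K,B,P,N⟩_R be a DPI, D a set of minimal diagnoses w.r.t. it, and Q a query w.r.t. D with Q ⊆ K. Then: (i) Q ∩ U_D ≠ ∅; (ii) Q ∩ I_D = ∅ (this holds for every query w.r.t. D, not only those contained in K); and (iii) Q' := Q \ (K \ U_D) is again a query w.r.t. D with the same q-partition as Q, i.e., ⟨dx(Q'), dnx(Q'), dz(Q')⟩ = ⟨dx(Q), dnx(Q), dz(Q)⟩. -/
namespace KBDDiag

namespace DPI

variable {L : Type*} (d : DPI L)

lemma entails_of_subset {X Y : Set L} (h : X ⊆ Y) {α : L} (hx : d.entails X α) :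
    d.entails Y α := by
  have h2 := d.entails_mono X Y α hx
  rwa [Set.union_eq_right.mpr h] at h2

lemma Kstar_props {Di : Set L} (hdiag : d.IsDiagnosis Di) :
    (∀ r ∈ d.R, r (d.Kstar Di)) ∧ (∀ p ∈ d.P, d.EntailsAll (d.Kstar Di) p) ∧
    (∀ n ∈ d.N, ¬ d.EntailsAll (d.Kstar Di) n) := by
  obtain ⟨-, hr, hp, hn⟩ := hdiag
  have heq : ((d.K \ Di) ∪ d.UP) ∪ d.B = d.Kstar Di := by
    unfold Kstar; rw [Set.union_right_comm]
  rw [heq] at hr hp hn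
  exact ⟨hr, hp, hn⟩

lemma violates_absorb {X A : Set L} (hA : ∀ α ∈ A, d.entails X α) :
    d.Violates (X ∪ A) ↔ d.Violates X := by
  constructor
  · rintro (⟨r, hr, hnr⟩ | ⟨n, hn, hent⟩)
    · exact Or.inl ⟨r, hr, fun hrX => hnr (d.sat_entailed r hr X A hrX hA)⟩
    · exact Or.inr ⟨n, hn, fun β hβ => d.entails_idem X A β hA (hent β hβ)⟩
  · rintro (⟨r, hr, hnr⟩ | ⟨n, hn, hent⟩)
    · exact Or.inl ⟨r, hr, d.viol_mono r hr X (X ∪ A) Set.subset_union_left hnr⟩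
    · exact Or.inr ⟨n, hn, fun β hβ => d.entails_mono X A β (hent β hβ)⟩

lemma not_violates_Kstar {Di : Set L} (hdiag : d.IsDiagnosis Di) :
    ¬ d.Violates (d.Kstar Di) := by
  obtain ⟨hr, -, hn⟩ := d.Kstar_props hdiag
  rintro (⟨r, hrR, hnr⟩ | ⟨n, hnN, hent⟩)
  · exact hnr (hr r hrR)
  · exact hn n hnN hent

end DPI

/-- For a query `Q ⊆ K` w.r.t. `Ds`: (i) `Q ∩ U_D ≠ ∅`;
(ii) every query `Q'` w.r.t. `Ds` satisfies `Q' ∩ I_D = ∅`; and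
(iii) `Q \ (K \ U_D)` is again a query with the same q-partition as `Q`. -/
theorem statement9 {L : Type*} (d : DPI L) (Ds : Set (Set L))
    (hDs : ∀ Di ∈ Ds, d.IsMinDiagnosis Di)
    (Q : Set L) (hQK : Q ⊆ d.K) (hQ : d.IsQuery Ds Q) :
    (Q ∩ ⋃₀ Ds).Nonempty ∧
    (∀ Q' : Set L, d.IsQuery Ds Q' → Q' ∩ ⋂₀ Ds = ∅) ∧
    (d.IsQuery Ds (Q \ (d.K \ ⋃₀ Ds)) ∧
     d.dxS Ds (Q \ (d.K \ ⋃₀ Ds)) = d.dxS Ds Q ∧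
     d.dnxS Ds (Q \ (d.K \ ⋃₀ Ds)) = d.dnxS Ds Q ∧
     d.dzS Ds (Q \ (d.K \ ⋃₀ Ds)) = d.dzS Ds Q) := by
  classical
  set U := ⋃₀ Ds with hU
  set Q' := Q \ (d.K \ U) with hQ'def
  have hdrop : ∀ Di ∈ Ds, ∀ α ∈ Q, α ∉ Q' → α ∈ d.Kstar Di := by
    intro Di hDi α hαQ hα'
    have hKU : α ∈ d.K \ U := by
      by_contra h
      exact hα' ⟨hαQ, h⟩
    have hnDi : α ∉ Di := fun h => hKU.2 ⟨Di, hDi, h⟩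
    exact Or.inl (Or.inl ⟨hKU.1, hnDi⟩)
  have hdx : ∀ Di ∈ Ds, (d.EntailsAll (d.Kstar Di) Q' ↔ d.EntailsAll (d.Kstar Di) Q) := by
    intro Di hDi
    constructor
    · intro h α hαQ
      by_cases hα' : α ∈ Q'
      · exact h α hα'
      · exact d.entails_ext _ α (hdrop Di hDi α hαQ hα')
    · intro h α hα'
      exact h α hα'.1
  have hdnx : ∀ Di ∈ Ds,
      (d.Violates (d.Kstar Di ∪ Q') ↔ d.Violates (d.Kstar Di ∪ Q)) := by
    intro Di hDi
    have hA : ∀ α ∈ Q \ Q', d.entails (d.Kstar Di ∪ Q') α := by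
      intro α hα
      exact d.entails_ext _ α (Or.inl (hdrop Di hDi α hα.1 hα.2))
    have heq : (d.Kstar Di ∪ Q') ∪ (Q \ Q') = d.Kstar Di ∪ Q := by
      have hss : Q' ⊆ Q := Set.diff_subset
      rw [Set.union_assoc, Set.union_diff_cancel hss]
    have habs := d.violates_absorb hA
    rw [heq] at habs
    exact habs.symm
  have hdxS : d.dxS Ds Q' = d.dxS Ds Q := by
    ext Di
    simp only [DPI.dxS, Set.mem_setOf_eq]
    exact and_congr_right fun h => hdx Di h
  have hdnxS : d.dnxS Ds Q' = d.dnxS Ds Q := by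
    ext Di
    simp only [DPI.dnxS, Set.mem_setOf_eq]
    exact and_congr_right fun h => hdnx Di h
  have hdzS : d.dzS Ds Q' = d.dzS Ds Q := by
    unfold DPI.dzS
    rw [hdxS, hdnxS]
  obtain ⟨-, hdxne, hdnxne⟩ := hQ
  obtain ⟨Dn, hDn⟩ := hdnxne
  simp only [DPI.dnxS, Set.mem_setOf_eq] at hDn
  obtain ⟨hDnDs, hviol⟩ := hDn
  have hQ'ne : Q'.Nonempty := by
    rw [Set.nonempty_iff_ne_empty]
    intro h
    have hA : ∀ α ∈ Q, d.entails (d.Kstar Dn) α := by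
      intro α hαQ
      have hα' : α ∉ Q' := by rw [h]; exact Set.notMem_empty α
      exact d.entails_ext _ α (hdrop Dn hDnDs α hαQ hα')
    exact d.not_violates_Kstar (hDs Dn hDnDs).1 ((d.violates_absorb hA).mp hviol)
  refine ⟨?_, ?_, ⟨hQ'ne, ?_, ?_⟩, hdxS, hdnxS, hdzS⟩
  · obtain ⟨α, hαQ, hαn⟩ := hQ'ne
    refine ⟨α, hαQ, ?_⟩
    by_contra hαU
    exact hαn ⟨hQK hαQ, hαU⟩
  · intro Q0 hQ0
    rw [Set.eq_empty_iff_forall_notMem]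
    rintro α ⟨hαQ0, hαI⟩
    obtain ⟨-, ⟨Di, hDi⟩, -⟩ := hQ0
    simp only [DPI.dxS, Set.mem_setOf_eq] at hDi
    obtain ⟨hDiDs, hent⟩ := hDi
    obtain ⟨hdiag, hmin⟩ := hDs Di hDiDs
    have hαDi : α ∈ Di := hαI Di hDiDs
    have hαK : α ∈ d.K := hdiag.1 hαDi
    have hsub : Di \ {α} ⊂ Di := by
      constructor
      · exact Set.diff_subset
      · intro hsub2
        exact (hsub2 hαDi).2 rfl
    apply hmin _ hsub
    refine ⟨Set.diff_subset.trans hdiag.1, ?_⟩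
    have hKeq : ((d.K \ (Di \ {α})) ∪ d.UP) ∪ d.B = d.Kstar Di ∪ {α} := by
      ext x
      by_cases hx : x = α
      · subst hx
        simp [DPI.Kstar, hαK]
      · simp only [DPI.Kstar, Set.mem_union, Set.mem_diff, Set.mem_singleton_iff, hx,
          or_false, not_and, not_not]
        tauto
    have hA : ∀ β ∈ ({α} : Set L), d.entails (d.Kstar Di) β := by
      rintro β hβ
      rw [Set.mem_singleton_iff] at hβ
      subst hβ
      exact hent _ hαQ0
    obtain ⟨hr, hp, hn⟩ := d.Kstar_props hdiag
    unfold DPI.IsSolutionKB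
    rw [hKeq]
    refine ⟨?_, ?_, ?_⟩
    · intro r hrR
      exact d.sat_entailed r hrR _ {α} (hr r hrR) hA
    · intro p hp' β hβ
      exact d.entails_mono _ {α} β (hp p hp' β hβ)
    · intro n hn' hcon
      exact hn n hn' fun β hβ => d.entails_idem _ {α} β hA (hcon β hβ)
  · rw [hdxS]; exact hdxne
  · rw [hdnxS]; exact ⟨Dn, hDnDs, hviol⟩

end KBDDiag
end

section
/- Let ⟨K,B,P,N⟩_R be a DPI and D a set of minimal diagnoses w.r.t. it. For every seed S with ∅ ⊂ S ⊂ D such that Q_can(S) is defined (i.e., (K \ U_S) ∩ Disc_D ≠ ∅), the canonical query Q_can(S) is a query w.r.t. D, i.e., dx(Q_can(S)) ≠ ∅ and dnx(Q_can(S)) ≠ ∅. -/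
namespace KBDDiag

/-- Any defined canonical query `Q_can(S)` for a seed `∅ ⊂ S ⊂ Ds`
is a query w.r.t. `Ds`. -/
theorem statement10 {L : Type*} (d : DPI L) (Ds : Set (Set L))
    (hDs : ∀ Di ∈ Ds, d.IsMinDiagnosis Di)
    (S : Set (Set L)) (hS1 : S.Nonempty) (hS2 : S ⊂ Ds)
    (hdef : (d.Qcan Ds S).Nonempty) :
    d.IsQuery Ds (d.Qcan Ds S) := by
  have emono : ∀ X Y : Set L, X ⊆ Y → ∀ β, d.entails X β → d.entails Y β := by
    intro X Y h β hx
    have := d.entails_mono X Y β hx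
    rwa [Set.union_eq_self_of_subset_left h] at this
  refine ⟨hdef, ?_, ?_⟩
  · -- dx nonempty: any Di ∈ S works
    obtain ⟨Di, hDi⟩ := hS1
    refine ⟨Di, hS2.subset hDi, ?_⟩
    intro α hα
    obtain ⟨⟨hαK, hαU⟩, -⟩ := hα
    exact d.entails_ext _ _ (Or.inl (Or.inl ⟨hαK, fun h => hαU ⟨Di, hDi, h⟩⟩))
  · -- dnx nonempty
    obtain ⟨α, hα⟩ := hdef
    obtain ⟨⟨hαK, hαU⟩, hαUD, hαID⟩ := hα
    obtain ⟨Dj, hDjDs, hαDj⟩ := hαUD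
    refine ⟨Dj, hDjDs, ?_⟩
    have hmin := hDs Dj hDjDs
    have hDjK : Dj ⊆ d.K := hmin.1.1
    have hsub : Dj \ {α} ⊂ Dj := by
      refine ⟨Set.diff_subset, fun h => ?_⟩
      exact (h hαDj).2 rfl
    have hnot := hmin.2 _ hsub
    have hnotsol : ¬ d.IsSolutionKB ((d.K \ (Dj \ {α})) ∪ d.UP) :=
      fun h => hnot ⟨Set.diff_subset.trans hDjK, h⟩
    -- the key set X0
    set X0 : Set L := ((d.K \ (Dj \ {α})) ∪ d.UP) ∪ d.B with hX0
    have hKsub : d.Kstar Dj ⊆ X0 := by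
      intro x hx
      rcases hx with (hx | hx) | hx
      · exact Or.inl (Or.inl ⟨hx.1, fun h => hx.2 h.1⟩)
      · exact Or.inr hx
      · exact Or.inl (Or.inr hx)
    have hX0sub : X0 ⊆ d.Kstar Dj ∪ d.Qcan Ds S := by
      intro x hx
      rcases hx with (hx | hx) | hx
      · rcases hx with ⟨hxK, hxD⟩
        by_cases hxDj : x ∈ Dj
        · have : x = α := by
            by_contra hne
            exact hxD ⟨hxDj, hne⟩
          subst this
          exact Or.inr ⟨⟨hαK, hαU⟩, ⟨Dj, hDjDs, hαDj⟩, hαID⟩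
        · exact Or.inl (Or.inl (Or.inl ⟨hxK, hxDj⟩))
      · exact Or.inl (Or.inr hx)
      · exact Or.inl (Or.inl (Or.inr hx))
    -- Dj is a diagnosis, so K*_j entails all positive test cases
    have hsol := hmin.1.2
    have hKstar : d.Kstar Dj = ((d.K \ Dj) ∪ d.UP) ∪ d.B := by
      unfold DPI.Kstar
      ext x; constructor <;> intro hx
      · rcases hx with (hx | hx) | hx
        · exact Or.inl (Or.inl hx)
        · exact Or.inr hx
        · exact Or.inl (Or.inr hx)
      · rcases hx with (hx | hx) | hx
        · exact Or.inl (Or.inl hx)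
        · exact Or.inr hx
        · exact Or.inl (Or.inr hx)
    -- X0 violates
    have hviol : d.Violates X0 := by
      by_contra hv
      unfold DPI.Violates at hv
      push_neg at hv
      apply hnotsol
      refine ⟨fun r hr => hv.1 r hr, fun p hp β hβ => ?_, fun n hn hent => ?_⟩
      · have := hsol.2.1 p hp β hβ
        rw [← hKstar] at *
        exact emono _ _ hKsub _ this
      · exact (hv.2 n hn) hent
    -- transfer violation to Kstar Dj ∪ Qcan
    rcases hviol with ⟨r, hr, hrX⟩ | ⟨n, hn, hent⟩
    · exact Or.inl ⟨r, hr, d.viol_mono r hr _ _ hX0sub hrX⟩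
    · exact Or.inr ⟨n, hn, fun β hβ => emono _ _ hX0sub _ (hent β hβ)⟩

end KBDDiag
end

section
/- Let ⟨K,B,P,N⟩_R be a DPI, D a set of minimal diagnoses w.r.t. it, and P a canonical q-partition w.r.t. D. Then there is exactly one canonical query whose q-partition equals P, namely Q_can(dx(P)): if S_1, S_2 are seeds with ∅ ⊂ S_1, S_2 ⊂ D such that Q_can(S_1) and Q_can(S_2) are defined and both have q-partition P, then Q_can(S_1) = Q_can(S_2) = Q_can(dx(P)). -/
namespace KBDDiag

lemma not_entails_of_mem_minDiag {L : Type*} (d : DPI L) (Di : Set L)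
    (hmin : d.IsMinDiagnosis Di) (α : L) (hα : α ∈ Di) :
    ¬ d.entails (d.Kstar Di) α := by
  intro hent
  have hαK : α ∈ d.K := hmin.1.1 hα
  set Kst := d.Kstar Di with hKst
  -- the original solution KB equals Kst
  have hEq0 : ((d.K \ Di) ∪ d.UP) ∪ d.B = Kst := by
    rw [hKst]; unfold DPI.Kstar; ext x; simp; tauto
  have hsol := hmin.1.2
  -- K \ (Di \ {α}) = (K \ Di) ∪ {α}
  have hK : d.K \ (Di \ {α}) = (d.K \ Di) ∪ {α} := by
    ext x
    simp only [Set.mem_diff, Set.mem_union, Set.mem_singleton_iff]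
    constructor
    · rintro ⟨h1, h2⟩
      by_cases hx : x = α
      · exact Or.inr hx
      · exact Or.inl ⟨h1, fun hd => h2 ⟨hd, hx⟩⟩
    · rintro (⟨h1, h2⟩ | rfl)
      · exact ⟨h1, fun hd => h2 hd.1⟩
      · exact ⟨hαK, fun hd => hd.2 rfl⟩
  have hEq : ((d.K \ (Di \ {α})) ∪ d.UP) ∪ d.B = Kst ∪ {α} := by
    rw [hK, hKst]; unfold DPI.Kstar; ext x; simp; tauto
  have hentA : ∀ β ∈ ({α} : Set L), d.entails Kst β := by
    intro β hβ; rw [Set.mem_singleton_iff] at hβ; subst hβ; exact hent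
  have hdiag : d.IsDiagnosis (Di \ {α}) := by
    refine ⟨(Set.diff_subset).trans hmin.1.1, ?_, ?_, ?_⟩
    · intro r hr
      rw [hEq]
      exact d.sat_entailed r hr Kst {α} (hEq0 ▸ hsol.1 r hr) hentA
    · intro p hp β hβ
      rw [hEq]
      exact d.entails_mono Kst {α} β (hEq0 ▸ hsol.2.1 p hp β hβ)
    · intro n hn hcon
      rw [hEq] at hcon
      refine (hEq0 ▸ hsol.2.2 n hn) (fun β hβ => ?_)
      exact d.entails_idem Kst {α} β hentA (hcon β hβ)
  exact hmin.2 (Di \ {α}) (Set.sdiff_singleton_ssubset.mpr hα) hdiag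

lemma qcan_eq_of_dx {L : Type*} (d : DPI L) (Ds : Set (Set L))
    (hDs : ∀ Di ∈ Ds, d.IsMinDiagnosis Di)
    (dxp S : Set (Set L)) (hSss : S ⊂ Ds)
    (hdx : d.dxS Ds (d.Qcan Ds S) = dxp) :
    d.Qcan Ds S = d.Qcan Ds dxp := by
  apply Set.Subset.antisymm
  · -- Qcan Ds S ⊆ Qcan Ds dxp
    rintro α ⟨⟨hαK, hαS⟩, hαDisc⟩
    refine ⟨⟨hαK, ?_⟩, hαDisc⟩
    rintro ⟨Di, hDi, hαDi⟩
    rw [← hdx] at hDi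
    obtain ⟨hDiDs, hEnt⟩ := hDi
    exact not_entails_of_mem_minDiag d Di (hDs Di hDiDs) α hαDi
      (hEnt α ⟨⟨hαK, hαS⟩, hαDisc⟩)
  · -- Qcan Ds dxp ⊆ Qcan Ds S : since S ⊆ dxp
    have hSdx : S ⊆ dxp := by
      intro Di hDi
      rw [← hdx]
      refine ⟨hSss.1 hDi, fun β hβ => ?_⟩
      obtain ⟨⟨hβK, hβS⟩, _⟩ := hβ
      apply d.entails_ext
      exact Or.inl (Or.inl ⟨hβK, fun hβDi => hβS ⟨Di, hDi, hβDi⟩⟩)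
    rintro α ⟨⟨hαK, hαdx⟩, hαDisc⟩
    exact ⟨⟨hαK, fun ⟨Di, hDi, hαDi⟩ => hαdx ⟨Di, hSdx hDi, hαDi⟩⟩, hαDisc⟩

/-- For a canonical q-partition `P = ⟨dxp, dnxp, ∅⟩`, the canonical query
with q-partition `P` is unique and equals `Q_can(dxp)`. -/
theorem statement11 {L : Type*} (d : DPI L) (Ds : Set (Set L))
    (hDs : ∀ Di ∈ Ds, d.IsMinDiagnosis Di)
    (dxp dnxp : Set (Set L)) (hP : d.IsCanonicalQPartition Ds dxp dnxp)
    (S1 S2 : Set (Set L))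
    (hS1ne : S1.Nonempty) (hS1ss : S1 ⊂ Ds) (hS1def : (d.Qcan Ds S1).Nonempty)
    (hS1qp : d.dxS Ds (d.Qcan Ds S1) = dxp ∧ d.dnxS Ds (d.Qcan Ds S1) = dnxp ∧
      d.dzS Ds (d.Qcan Ds S1) = ∅)
    (hS2ne : S2.Nonempty) (hS2ss : S2 ⊂ Ds) (hS2def : (d.Qcan Ds S2).Nonempty)
    (hS2qp : d.dxS Ds (d.Qcan Ds S2) = dxp ∧ d.dnxS Ds (d.Qcan Ds S2) = dnxp ∧
      d.dzS Ds (d.Qcan Ds S2) = ∅) :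
    d.Qcan Ds S1 = d.Qcan Ds dxp ∧ d.Qcan Ds S2 = d.Qcan Ds dxp := by
  exact ⟨qcan_eq_of_dx d Ds hDs dxp S1 hS1ss hS1qp.1,
    qcan_eq_of_dx d Ds hDs dxp S2 hS2ss hS2qp.1⟩

end KBDDiag
end

section
/- Let ⟨K,B,P,N⟩_R be a DPI, D a set of minimal diagnoses w.r.t. it, and P = ⟨dx, dnx, ∅⟩ a partition of D with dx ≠ ∅ and dnx ≠ ∅. Then P is a canonical q-partition if and only if (1) U_dx ⊊ U_D and (2) there is no D_j ∈ dnx such that D_j ⊆ U_dx. -/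
namespace KBDDiag

section Aux

variable {L : Type*} (d : DPI L)

lemma kstar_eq' (Di : Set L) :
    d.Kstar Di = ((d.K \ Di) ∪ d.UP) ∪ d.B :=
  Set.union_right_comm _ _ _

/-- A diagnosis yields a non-violating K*. -/
lemma diag_not_violates {Di : Set L} (h : d.IsDiagnosis Di) :
    ¬ d.Violates (d.Kstar Di) := by
  obtain ⟨-, hr, -, hn⟩ := h
  intro hv
  rw [kstar_eq'] at hv
  rcases hv with ⟨r, hrR, hnr⟩ | ⟨n, hnN, he⟩
  · exact hnr (hr r hrR)
  · exact hn n hnN he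

/-- A non-diagnosis subset of K yields a violating K*. -/
lemma not_diag_violates {D' : Set L} (hsub : D' ⊆ d.K) (h : ¬ d.IsDiagnosis D') :
    d.Violates (d.Kstar D') := by
  have hns : ¬ d.IsSolutionKB ((d.K \ D') ∪ d.UP) := fun hs => h ⟨hsub, hs⟩
  by_contra hv
  rw [DPI.Violates] at hv
  push_neg at hv
  obtain ⟨hv1, hv2⟩ := hv
  apply hns
  refine ⟨?_, ?_, ?_⟩
  · intro r hr
    have := hv1 r hr
    rw [kstar_eq'] at this
    exact this
  · intro p hp α hα
    exact d.entails_ext _ α (Or.inl (Or.inr ⟨p, hp, hα⟩))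
  · intro n hn he
    have := hv2 n hn
    rw [kstar_eq'] at this
    exact this he

lemma kstar_union (Di Q : Set L) (hQ : Q ⊆ d.K) :
    d.Kstar Di ∪ Q = d.Kstar (Di \ Q) := by
  have h1 : d.K \ (Di \ Q) = (d.K \ Di) ∪ Q := by
    ext x
    simp only [Set.mem_diff, Set.mem_union, not_and, not_not]
    constructor
    · rintro ⟨hxK, h2⟩
      by_cases hx : x ∈ Di
      · exact Or.inr (h2 hx)
      · exact Or.inl ⟨hxK, hx⟩
    · rintro (⟨hxK, hxD⟩ | hxQ)
      · exact ⟨hxK, fun h => absurd h hxD⟩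
      · exact ⟨hQ hxQ, fun _ => hxQ⟩
  simp only [DPI.Kstar, h1]
  ext x
  simp only [Set.mem_union]
  tauto

/-- Key characterization: K*_i ∪ Q violates iff Q hits Di. -/
lemma violates_iff {Di Q : Set L} (hmin : d.IsMinDiagnosis Di) (hQ : Q ⊆ d.K) :
    d.Violates (d.Kstar Di ∪ Q) ↔ (Di ∩ Q).Nonempty := by
  constructor
  · intro hv
    rw [Set.nonempty_iff_ne_empty]
    intro hempty
    have hQsub : Q ⊆ d.Kstar Di := by
      intro x hx
      have hxn : x ∉ Di := fun hxD =>
        (Set.eq_empty_iff_forall_notMem.mp hempty x) ⟨hxD, hx⟩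
      exact Or.inl (Or.inl ⟨hQ hx, hxn⟩)
    rw [Set.union_eq_self_of_subset_right hQsub] at hv
    exact diag_not_violates d hmin.1 hv
  · rintro ⟨x, hxD, hxQ⟩
    rw [kstar_union d Di Q hQ]
    have hss : Di \ Q ⊂ Di := by
      refine Set.ssubset_iff_subset_ne.mpr ⟨Set.diff_subset, fun h => ?_⟩
      have : x ∈ Di \ Q := by rw [h]; exact hxD
      exact this.2 hxQ
    exact not_diag_violates d (Set.diff_subset.trans hmin.1.1) (hmin.2 _ hss)

/-- If K*_i does not violate and entails Q, then K*_i ∪ Q does not violate. -/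
lemma not_violates_union {Di : Set L} {Q : Set L}
    (hnv : ¬ d.Violates (d.Kstar Di))
    (hent : d.EntailsAll (d.Kstar Di) Q) : ¬ d.Violates (d.Kstar Di ∪ Q) := by
  intro hv
  apply hnv
  rcases hv with ⟨r, hrR, hnr⟩ | ⟨n, hnN, he⟩
  · exact Or.inl ⟨r, hrR, fun hr => hnr (d.sat_entailed r hrR _ Q hr hent)⟩
  · exact Or.inr ⟨n, hnN, fun β hβ => d.entails_idem _ Q β hent (he β hβ)⟩

end Aux

/-- A partition `⟨dxp, dnxp, ∅⟩` of `Ds` with `dxp ≠ ∅ ≠ dnxp` is a canonical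
q-partition iff `U_dxp ⊊ U_Ds` and no `Dj ∈ dnxp` satisfies `Dj ⊆ U_dxp`. -/
theorem statement12 {L : Type*} (d : DPI L) (Ds : Set (Set L))
    (hDs : ∀ Di ∈ Ds, d.IsMinDiagnosis Di)
    (dxp dnxp : Set (Set L))
    (hpart : dxp ∪ dnxp = Ds) (hdisj : dxp ∩ dnxp = ∅)
    (hne1 : dxp.Nonempty) (hne2 : dnxp.Nonempty) :
    d.IsCanonicalQPartition Ds dxp dnxp ↔
      (⋃₀ dxp ⊂ ⋃₀ Ds ∧ ¬ ∃ Dj ∈ dnxp, Dj ⊆ ⋃₀ dxp) := by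
  set Q := d.Qcan Ds dxp with hQdef
  have hQsubK : Q ⊆ d.K := fun x hx => hx.1.1
  have hQdxp : ∀ x ∈ Q, x ∉ ⋃₀ dxp := fun x hx => hx.1.2
  have hdxpDs : dxp ⊆ Ds := by rw [← hpart]; exact Set.subset_union_left
  have hdnxpDs : dnxp ⊆ Ds := by rw [← hpart]; exact Set.subset_union_right
  -- dxp ⊆ dxS Q
  have hdxsub : ∀ Di ∈ dxp, Di ∈ d.dxS Ds Q := by
    intro Di hDi
    refine ⟨hdxpDs hDi, fun α hα => d.entails_ext _ α ?_⟩
    exact Or.inl (Or.inl ⟨hα.1.1, fun hαD => hα.1.2 ⟨Di, hDi, hαD⟩⟩)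
  -- elements of dnxp outside ⋃₀dxp lie in Q
  have hmemQ : ∀ Dj ∈ dnxp, ∀ x ∈ Dj, x ∉ ⋃₀ dxp → x ∈ Q := by
    intro Dj hDj x hxDj hxU
    obtain ⟨D0, hD0⟩ := hne1
    refine ⟨⟨(hDs Dj (hdnxpDs hDj)).1.1 hxDj, hxU⟩, ⟨Dj, hdnxpDs hDj, hxDj⟩, ?_⟩
    intro hxI
    exact hxU ⟨D0, hD0, Set.mem_sInter.mp hxI D0 (hdxpDs hD0)⟩
  have hdnxsub : ∀ Dj ∈ dnxp, ¬ Dj ⊆ ⋃₀ dxp → Dj ∈ d.dnxS Ds Q := by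
    intro Dj hDj hnsub
    obtain ⟨x, hxDj, hxU⟩ := Set.not_subset.mp hnsub
    refine ⟨hdnxpDs hDj, ?_⟩
    rw [violates_iff d (hDs Dj (hdnxpDs hDj)) hQsubK]
    exact ⟨x, hxDj, hmemQ Dj hDj x hxDj hxU⟩
  constructor
  · rintro ⟨-, -, -, -, -, hdx, hdnx, -⟩
    have key : ∀ Dj ∈ dnxp, ¬ Dj ⊆ ⋃₀ dxp := by
      intro Dj hDj hsub
      have hmem : Dj ∈ d.dnxS Ds Q := by rw [hdnx]; exact hDj
      obtain ⟨x, hxDj, hxQ⟩ :=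
        (violates_iff d (hDs Dj (hdnxpDs hDj)) hQsubK).mp hmem.2
      exact hQdxp x hxQ (hsub hxDj)
    refine ⟨?_, fun ⟨Dj, hDj, hsub⟩ => key Dj hDj hsub⟩
    obtain ⟨Dj, hDj⟩ := hne2
    obtain ⟨x, hxDj, hxU⟩ := Set.not_subset.mp (key Dj hDj)
    exact (Set.ssubset_iff_of_subset (Set.sUnion_mono hdxpDs)).mpr
      ⟨x, ⟨Dj, hdnxpDs hDj, hxDj⟩, hxU⟩
  · rintro ⟨hUss, hnosub⟩
    have key : ∀ Dj ∈ dnxp, ¬ Dj ⊆ ⋃₀ dxp := fun Dj hDj hsub => hnosub ⟨Dj, hDj, hsub⟩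
    have hdxS : d.dxS Ds Q = dxp := by
      apply Set.eq_of_subset_of_subset
      · intro Di hDi
        have hDiDs : Di ∈ Ds := hDi.1
        have hDiU : Di ∈ dxp ∪ dnxp := by rw [hpart]; exact hDiDs
        rcases hDiU with h | h
        · exact h
        · exfalso
          have hv : d.Violates (d.Kstar Di ∪ Q) := by
            rw [violates_iff d (hDs Di hDiDs) hQsubK]
            obtain ⟨x, hxDi, hxU⟩ := Set.not_subset.mp (key Di h)
            exact ⟨x, hxDi, hmemQ Di h x hxDi hxU⟩
          exact not_violates_union d
            (diag_not_violates d (hDs Di hDiDs).1) hDi.2 hv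
      · exact fun Di hDi => hdxsub Di hDi
    have hdnxS : d.dnxS Ds Q = dnxp := by
      apply Set.eq_of_subset_of_subset
      · intro Di hDi
        have hDiDs : Di ∈ Ds := hDi.1
        obtain ⟨x, hxDi, hxQ⟩ :=
          (violates_iff d (hDs Di hDiDs) hQsubK).mp hDi.2
        have hDiU : Di ∈ dxp ∪ dnxp := by rw [hpart]; exact hDiDs
        rcases hDiU with h | h
        · exact absurd ⟨Di, h, hxDi⟩ (hQdxp x hxQ)
        · exact h
      · exact fun Dj hDj => hdnxsub Dj hDj (key Dj hDj)
    refine ⟨hpart, hdisj, hne1, ?_, ?_, hdxS, hdnxS, ?_⟩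
    · obtain ⟨Dj, hDj⟩ := hne2
      refine (Set.ssubset_iff_of_subset hdxpDs).mpr ⟨Dj, hdnxpDs hDj, fun hin => ?_⟩
      exact (Set.eq_empty_iff_forall_notMem.mp hdisj Dj) ⟨hin, hDj⟩
    · obtain ⟨Dj, hDj⟩ := hne2
      obtain ⟨x, hxDj, hxU⟩ := Set.not_subset.mp (key Dj hDj)
      exact ⟨x, hmemQ Dj hDj x hxDj hxU⟩
    · rw [DPI.dzS, hdxS, hdnxS, hpart, Set.diff_self]

end KBDDiag
end

section
/- Let ⟨K,B,P,N⟩_R be a DPI, D a set of minimal diagnoses w.r.t. it, and P_k = ⟨dx_k, dnx_k, ∅⟩ a canonical q-partition of D. (Soundness:) Suppose D' ∈ dnx_k, set dx_y := dx_k ∪ {D'}, and assume U_{dx_y} ⊊ U_D and U_{dx_y} is ⊆-minimal in the family {U_{dx_k ∪ {D''}} : D'' ∈ dnx_k}; define dx_s := {D_i ∈ D : D_i \ U_{dx_y} = ∅}, dnx_s := {D_i ∈ D : D_i \ U_{dx_y} ≠ ∅}, and P_s := ⟨dx_s, dnx_s, ∅⟩. Then P_k ↦ P_s is a minimal dx-transformation.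 (Completeness:) Conversely, every partition P_s of D such that P_k ↦ P_s is a minimal dx-transformation arises in this way, i.e., there exists D' ∈ dnx_k such that dx_y := dx_k ∪ {D'} satisfies U_{dx_y} ⊊ U_D, U_{dx_y} is ⊆-minimal in {U_{dx_k ∪ {D''}} : D'' ∈ dnx_k}, and dx_s = {D_i ∈ D : D_i \ U_{dx_y} = ∅} and dnx_s = {D_i ∈ D : D_i \ U_{dx_y} ≠ ∅}. -/
namespace KBDDiag

section Aux

variable {L : Type*}

lemma violates_mono (d : DPI L) {X Y : Set L} (hXY : X ⊆ Y) (h : d.Violates X) :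
    d.Violates Y := by
  rcases h with ⟨r, hr, hnr⟩ | ⟨n, hn, hE⟩
  · exact Or.inl ⟨r, hr, d.viol_mono r hr X Y hXY hnr⟩
  · refine Or.inr ⟨n, hn, fun α hα => ?_⟩
    have h2 := d.entails_mono X Y α (hE α hα)
    rwa [Set.union_eq_self_of_subset_left hXY] at h2

lemma qcan_parts (d : DPI L) (Ds : Set (Set L)) (hDs : ∀ Di ∈ Ds, d.IsMinDiagnosis Di)
    (S : Set (Set L)) (hS : S.Nonempty) (hSDs : S ⊆ Ds) :
    d.dxS Ds (d.Qcan Ds S) = {Di ∈ Ds | Di ⊆ ⋃₀ S} ∧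
    d.dnxS Ds (d.Qcan Ds S) = {Di ∈ Ds | ¬ Di ⊆ ⋃₀ S} ∧
    d.dzS Ds (d.Qcan Ds S) = ∅ := by
  have hQK : d.Qcan Ds S ⊆ d.K := fun x hx => hx.1.1
  have hIU : ⋂₀ Ds ⊆ ⋃₀ S := by
    obtain ⟨D0, hD0⟩ := hS
    exact fun x hx => ⟨D0, hD0, hx D0 (hSDs hD0)⟩
  have hinter : ∀ Di ∈ Ds, Di ∩ d.Qcan Ds S = Di \ ⋃₀ S := by
    intro Di hDi
    have hKi : Di ⊆ d.K := (hDs Di hDi).1.1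
    ext x
    constructor
    · rintro ⟨hxD, ⟨_, hnS⟩, _⟩; exact ⟨hxD, hnS⟩
    · rintro ⟨hxD, hnS⟩
      exact ⟨hxD, ⟨hKi hxD, hnS⟩, ⟨Di, hDi, hxD⟩, fun hI => hnS (hIU hI)⟩
  have key_ent : ∀ Di ∈ Ds, Di ⊆ ⋃₀ S → d.EntailsAll (d.Kstar Di) (d.Qcan Ds S) := by
    intro Di hDi hsub α hαQ
    refine d.entails_ext _ α (Or.inl (Or.inl ⟨hQK hαQ, fun hαD => ?_⟩))
    have hm : α ∈ Di \ ⋃₀ S := by rw [← hinter Di hDi]; exact ⟨hαD, hαQ⟩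
    exact hm.2 (hsub hm.1)
  have key_in : ∀ Di ∈ Ds, ¬ Di ⊆ ⋃₀ S → d.Violates (d.Kstar Di ∪ d.Qcan Ds S) := by
    intro Di hDi hnsub
    obtain ⟨α, hαD, hαnS⟩ := Set.not_subset.mp hnsub
    have hαQ : α ∈ d.Qcan Ds S := by
      have hm : α ∈ Di ∩ d.Qcan Ds S := by rw [hinter Di hDi]; exact ⟨hαD, hαnS⟩
      exact hm.2
    have hmin := hDs Di hDi
    have hKi : Di ⊆ d.K := hmin.1.1
    have hnd : ¬ d.IsDiagnosis (Di \ {α}) :=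
      hmin.2 _ (Set.sdiff_singleton_ssubset.mpr hαD)
    have hviolX : d.Violates (((d.K \ (Di \ {α})) ∪ d.UP) ∪ d.B) := by
      by_contra hv
      rw [DPI.Violates] at hv
      push_neg at hv
      exact hnd ⟨fun x hx => hKi hx.1, hv.1,
        fun p hp β hβ => d.entails_ext _ β (Or.inl (Or.inr ⟨p, hp, hβ⟩)), hv.2⟩
    refine violates_mono d ?_ hviolX
    rintro x (hx | hxB)
    · rcases hx with ⟨hxK, hxD'⟩ | hxU
      · by_cases hxα : x = α
        · exact Or.inr (hxα ▸ hαQ)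
        · exact Or.inl (Or.inl (Or.inl ⟨hxK, fun h => hxD' ⟨h, hxα⟩⟩))
      · exact Or.inl (Or.inr hxU)
    · exact Or.inl (Or.inl (Or.inr hxB))
  have key_not : ∀ Di ∈ Ds, d.EntailsAll (d.Kstar Di) (d.Qcan Ds S) →
      ¬ d.Violates (d.Kstar Di ∪ d.Qcan Ds S) := by
    intro Di hDi hEnt hviol
    obtain ⟨hs1, hs2, hs3⟩ := (hDs Di hDi).1.2
    have hEq : ((d.K \ Di) ∪ d.UP) ∪ d.B = d.Kstar Di := by
      rw [DPI.Kstar, Set.union_right_comm]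
    rw [hEq] at hs1 hs3
    rcases hviol with ⟨r, hr, hnr⟩ | ⟨n, hn, hE⟩
    · exact hnr (d.sat_entailed r hr _ _ (hs1 r hr) hEnt)
    · exact hs3 n hn fun β hβ => d.entails_idem _ _ β hEnt (hE β hβ)
  have hdx : d.dxS Ds (d.Qcan Ds S) = {Di ∈ Ds | Di ⊆ ⋃₀ S} := by
    ext Di
    constructor
    · rintro ⟨hDi, hE⟩
      refine ⟨hDi, by_contra fun hn => key_not Di hDi hE (key_in Di hDi hn)⟩
    · rintro ⟨hDi, hsub⟩
      exact ⟨hDi, key_ent Di hDi hsub⟩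
  have hdnx : d.dnxS Ds (d.Qcan Ds S) = {Di ∈ Ds | ¬ Di ⊆ ⋃₀ S} := by
    ext Di
    constructor
    · rintro ⟨hDi, hV⟩
      refine ⟨hDi, fun hsub => key_not Di hDi (key_ent Di hDi hsub) hV⟩
    · rintro ⟨hDi, hn⟩
      exact ⟨hDi, key_in Di hDi hn⟩
  refine ⟨hdx, hdnx, ?_⟩
  rw [DPI.dzS, hdx, hdnx, Set.eq_empty_iff_forall_notMem]
  rintro Di ⟨hDi, hn⟩
  by_cases h : Di ⊆ ⋃₀ S
  · exact hn (Or.inl ⟨hDi, h⟩)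
  · exact hn (Or.inr ⟨hDi, h⟩)

lemma canon_iff (d : DPI L) (Ds : Set (Set L)) (hDs : ∀ Di ∈ Ds, d.IsMinDiagnosis Di)
    (dxp dnxp : Set (Set L)) (hne : dxp.Nonempty) (hsub : dxp ⊆ Ds) :
    d.IsCanonicalQPartition Ds dxp dnxp ↔
      (⋃₀ dxp ⊂ ⋃₀ Ds ∧ dxp = {Di ∈ Ds | Di ⊆ ⋃₀ dxp} ∧
        dnxp = {Di ∈ Ds | ¬ Di ⊆ ⋃₀ dxp}) := by
  obtain ⟨hdx, hdnx, hdz⟩ := qcan_parts d Ds hDs dxp hne hsub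
  have hUsub : ⋃₀ dxp ⊆ ⋃₀ Ds := Set.sUnion_mono hsub
  constructor
  · rintro ⟨hun, hint, _, hssDs, hQne, hdxeq, hdnxeq, _⟩
    obtain ⟨x, hx⟩ := hQne
    exact ⟨(Set.ssubset_iff_of_subset hUsub).mpr ⟨x, hx.2.1, hx.1.2⟩,
      hdxeq.symm.trans hdx, hdnxeq.symm.trans hdnx⟩
  · rintro ⟨hUss, hdxeq, hdnxeq⟩
    obtain ⟨x, hxU, hxn⟩ := (Set.ssubset_iff_of_subset hUsub).mp hUss
    obtain ⟨Dj, hDj, hxDj⟩ := hxU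
    have hQne : (d.Qcan Ds dxp).Nonempty := by
      refine ⟨x, ⟨(hDs Dj hDj).1.1 hxDj, hxn⟩, ⟨Dj, hDj, hxDj⟩, fun hI => ?_⟩
      obtain ⟨D0, hD0⟩ := hne
      exact hxn ⟨D0, hD0, hI D0 (hsub hD0)⟩
    refine ⟨?_, ?_, hne, (Set.ssubset_iff_of_subset hsub).mpr
      ⟨Dj, hDj, fun h => hxn ⟨Dj, h, hxDj⟩⟩, hQne,
      hdx.trans hdxeq.symm, hdnx.trans hdnxeq.symm, hdz⟩
    · rw [hdxeq, hdnxeq]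
      ext Di
      simp only [Set.mem_union, Set.mem_setOf_eq, Set.mem_sep_iff]
      tauto
    · rw [hdxeq, hdnxeq, Set.eq_empty_iff_forall_notMem]
      rintro Di ⟨⟨_, h1⟩, ⟨_, h2⟩⟩
      exact h2 h1

end Aux

/-- `P_i ↦ P_j` is a minimal dx-transformation (of partitions of `Ds`). -/
def DPI.IsMinimalDxTransf {L : Type*} (d : DPI L) (Ds dxi dxj dnxj : Set (Set L)) : Prop :=
  d.IsCanonicalQPartition Ds dxj dnxj ∧ dxi ⊂ dxj ∧
  ¬ ∃ dx' dnx' : Set (Set L), d.IsCanonicalQPartition Ds dx' dnx' ∧ dxi ⊂ dx' ∧ dx' ⊂ dxj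

/-- Soundness and completeness of the successor construction for minimal
dx-transformations from a canonical q-partition `P_k = ⟨dxk, dnxk, ∅⟩`. -/
theorem statement14 {L : Type*} (d : DPI L) (Ds : Set (Set L))
    (hDs : ∀ Di ∈ Ds, d.IsMinDiagnosis Di)
    (dxk dnxk : Set (Set L)) (hk : d.IsCanonicalQPartition Ds dxk dnxk) :
    (∀ D' ∈ dnxk,
        ⋃₀ (dxk ∪ {D'}) ⊂ ⋃₀ Ds →
        (∀ D'' ∈ dnxk, ¬ ⋃₀ (dxk ∪ {D''}) ⊂ ⋃₀ (dxk ∪ {D'})) →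
        d.IsMinimalDxTransf Ds dxk
          {Di ∈ Ds | Di \ ⋃₀ (dxk ∪ {D'}) = ∅}
          {Di ∈ Ds | Di \ ⋃₀ (dxk ∪ {D'}) ≠ ∅}) ∧
    (∀ dxs dnxs : Set (Set L),
        d.IsMinimalDxTransf Ds dxk dxs dnxs →
        ∃ D' ∈ dnxk,
          ⋃₀ (dxk ∪ {D'}) ⊂ ⋃₀ Ds ∧
          (∀ D'' ∈ dnxk, ¬ ⋃₀ (dxk ∪ {D''}) ⊂ ⋃₀ (dxk ∪ {D'})) ∧
          dxs = {Di ∈ Ds | Di \ ⋃₀ (dxk ∪ {D'}) = ∅} ∧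
          dnxs = {Di ∈ Ds | Di \ ⋃₀ (dxk ∪ {D'}) ≠ ∅}) := by
  have hkun := hk.1
  have hkint := hk.2.1
  have hkne := hk.2.2.1
  have hkss := hk.2.2.2.1
  have hksub : dxk ⊆ Ds := hkss.subset
  obtain ⟨hkU, hkfix, hkdnxeq⟩ := (canon_iff d Ds hDs dxk dnxk hkne hksub).mp hk
  have hdnxk_sub : dnxk ⊆ Ds := by rw [← hkun]; exact Set.subset_union_right
  have hdisj : ∀ D, D ∈ dxk → D ∈ dnxk → False := by
    intro D h1 h2
    have hm : D ∈ dxk ∩ dnxk := ⟨h1, h2⟩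
    rw [hkint] at hm
    exact hm
  have hUW : ∀ W : Set L, ⋃₀ {Di ∈ Ds | Di ⊆ W} ⊆ W := by
    rintro W x ⟨Dj, hDj, hx⟩
    exact hDj.2 hx
  have mk_canon : ∀ W : Set L, ⋃₀ dxk ⊆ W → W ⊂ ⋃₀ Ds →
      d.IsCanonicalQPartition Ds {Di ∈ Ds | Di ⊆ W} {Di ∈ Ds | ¬ Di ⊆ W} ∧
      dxk ⊆ {Di ∈ Ds | Di ⊆ W} := by
    intro W hkW hWss
    have hsubW : dxk ⊆ {Di ∈ Ds | Di ⊆ W} := by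
      intro D hD
      exact ⟨hksub hD, (Set.subset_sUnion_of_mem hD).trans hkW⟩
    have hne' : ({Di ∈ Ds | Di ⊆ W} : Set (Set L)).Nonempty := hkne.mono hsubW
    have hbi : ∀ Di ∈ Ds, (Di ⊆ W ↔ Di ⊆ ⋃₀ {Dj ∈ Ds | Dj ⊆ W}) := by
      intro Di hDi
      exact ⟨fun h x hx => ⟨Di, ⟨hDi, h⟩, hx⟩, fun h => h.trans (hUW W)⟩
    refine ⟨(canon_iff d Ds hDs _ _ hne' (fun D hD => hD.1)).mpr ⟨?_, ?_, ?_⟩, hsubW⟩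
    · obtain ⟨x, hxU, hxW⟩ := (Set.ssubset_iff_of_subset hWss.subset).mp hWss
      exact (Set.ssubset_iff_of_subset ((hUW W).trans hWss.subset)).mpr
        ⟨x, hxU, fun h => hxW (hUW W h)⟩
    · ext Di
      exact ⟨fun h => ⟨h.1, (hbi Di h.1).mp h.2⟩, fun h => ⟨h.1, (hbi Di h.1).mpr h.2⟩⟩
    · ext Di
      exact ⟨fun h => ⟨h.1, fun hc => h.2 ((hbi Di h.1).mpr hc)⟩,
        fun h => ⟨h.1, fun hc => h.2 ((hbi Di h.1).mp hc)⟩⟩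
  constructor
  · -- Soundness
    intro D' hD' hUss hmin
    set U := ⋃₀ (dxk ∪ {D'}) with hUdef
    have hkUsub : ⋃₀ dxk ⊆ U := Set.sUnion_mono Set.subset_union_left
    have hD'U : D' ⊆ U := Set.subset_sUnion_of_mem (Or.inr rfl)
    obtain ⟨hcanon, hdxk_sub'⟩ := mk_canon U hkUsub hUss
    have hset1 : {Di ∈ Ds | Di \ U = ∅} = {Di ∈ Ds | Di ⊆ U} := by
      ext Di; simp [Set.diff_eq_empty]
    have hset2 : {Di ∈ Ds | Di \ U ≠ ∅} = {Di ∈ Ds | ¬ Di ⊆ U} := by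
      ext Di; simp [Set.diff_eq_empty]
    rw [hset1, hset2]
    refine ⟨hcanon, ?_, ?_⟩
    · rw [Set.ssubset_def]
      exact ⟨hdxk_sub', fun hback => hdisj D' (hback ⟨hdnxk_sub hD', hD'U⟩) hD'⟩
    · rintro ⟨dx', dnx', hc', hk', hs'⟩
      obtain ⟨_, hfix', _⟩ :=
        (canon_iff d Ds hDs dx' dnx' hc'.2.2.1 hc'.2.2.2.1.subset).mp hc'
      obtain ⟨D'', hD''in, hD''notk⟩ := Set.exists_of_ssubset hk'
      have hD''Ds : D'' ∈ Ds := hc'.2.2.2.1.subset hD''in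
      have hD''dnx : D'' ∈ dnxk := by
        have hm : D'' ∈ dxk ∪ dnxk := hkun ▸ hD''Ds
        rcases hm with h | h
        · exact absurd h hD''notk
        · exact h
      have hU''subU : ⋃₀ (dxk ∪ {D''}) ⊆ ⋃₀ dx' := by
        apply Set.sUnion_subset
        rintro D (hD | hD)
        · exact Set.subset_sUnion_of_mem (hk'.subset hD)
        · rw [Set.mem_singleton_iff] at hD; subst hD
          exact Set.subset_sUnion_of_mem hD''in
      have hdx'U : ⋃₀ dx' ⊆ U := by
        apply Set.sUnion_subset
        intro D hD
        exact (hs'.subset hD).2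
      have hU''U : ⋃₀ (dxk ∪ {D''}) = U := by
        by_contra hne'
        exact hmin D'' hD''dnx ((hU''subU.trans hdx'U).ssubset_of_ne hne')
      have hUdx' : U ⊆ ⋃₀ dx' := by rw [← hU''U]; exact hU''subU
      have hsup : {Di ∈ Ds | Di ⊆ U} ⊆ dx' := by
        rintro Di ⟨hDi, hDiU⟩
        rw [hfix']
        exact ⟨hDi, hDiU.trans hUdx'⟩
      exact hs'.not_subset hsup
  · -- Completeness
    intro dxs dnxs hmt
    obtain ⟨hcs, hks, hnomid⟩ := hmt
    obtain ⟨hsU, hsfix, hsdnxeq⟩ :=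
      (canon_iff d Ds hDs dxs dnxs hcs.2.2.1 hcs.2.2.2.1.subset).mp hcs
    have hssub : dxs ⊆ Ds := hcs.2.2.2.1.subset
    obtain ⟨D', hD'in, hD'notk⟩ := Set.exists_of_ssubset hks
    have hD'Ds : D' ∈ Ds := hssub hD'in
    have hD'dnx : D' ∈ dnxk := by
      have hm : D' ∈ dxk ∪ dnxk := hkun ▸ hD'Ds
      rcases hm with h | h
      · exact absurd h hD'notk
      · exact h
    set U' := ⋃₀ (dxk ∪ {D'}) with hU'def
    have hkU' : ⋃₀ dxk ⊆ U' := Set.sUnion_mono Set.subset_union_left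
    have hU'sub : U' ⊆ ⋃₀ dxs := by
      apply Set.sUnion_subset
      rintro D (hD | hD)
      · exact Set.subset_sUnion_of_mem (hks.subset hD)
      · rw [Set.mem_singleton_iff] at hD; subst hD
        exact Set.subset_sUnion_of_mem hD'in
    have hU'ss : U' ⊂ ⋃₀ Ds := hU'sub.trans_ssubset hsU
    obtain ⟨hcanon', hsubk'⟩ := mk_canon U' hkU' hU'ss
    have hdx'sub : {Di ∈ Ds | Di ⊆ U'} ⊆ dxs := by
      rintro Di ⟨hDi, hDiU⟩
      rw [hsfix]
      exact ⟨hDi, hDiU.trans hU'sub⟩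
    have hkss' : dxk ⊂ {Di ∈ Ds | Di ⊆ U'} := by
      rw [Set.ssubset_def]
      exact ⟨hsubk', fun hback =>
        hD'notk (hback ⟨hD'Ds, Set.subset_sUnion_of_mem (Or.inr rfl)⟩)⟩
    have hdxeq : dxs = {Di ∈ Ds | Di ⊆ U'} := by
      by_contra hne'
      exact hnomid ⟨_, _, hcanon', hkss',
        hdx'sub.ssubset_of_ne fun h => hne' h.symm⟩
    have hUeq : ⋃₀ dxs = U' := by
      apply Set.Subset.antisymm _ hU'sub
      rw [hdxeq]
      exact hUW U'
    refine ⟨D', hD'dnx, hU'ss, ?_, ?_, ?_⟩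
    · intro D'' hD'' hlt
      have hkU'' : ⋃₀ dxk ⊆ ⋃₀ (dxk ∪ {D''}) := Set.sUnion_mono Set.subset_union_left
      have hU''ss : ⋃₀ (dxk ∪ {D''}) ⊂ ⋃₀ Ds := hlt.trans hU'ss
      obtain ⟨hcanon'', hsub''⟩ := mk_canon _ hkU'' hU''ss
      apply hnomid
      refine ⟨_, _, hcanon'', ?_, ?_⟩
      · rw [Set.ssubset_def]
        exact ⟨hsub'', fun hback => hdisj D''
          (hback ⟨hdnxk_sub hD'', Set.subset_sUnion_of_mem (Or.inr rfl)⟩) hD''⟩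
      · rw [Set.ssubset_def]
        constructor
        · rintro Di ⟨hDi, hDiU⟩
          rw [hdxeq]
          exact ⟨hDi, hDiU.trans hlt.subset⟩
        · intro hback
          have hD'mem : D' ∈ {Di ∈ Ds | Di ⊆ ⋃₀ (dxk ∪ {D''})} := hback (hdxeq ▸ hD'in)
          have hU'U'' : U' ⊆ ⋃₀ (dxk ∪ {D''}) := by
            apply Set.sUnion_subset
            rintro D (hD | hD)
            · exact (Set.subset_sUnion_of_mem hD).trans hkU''
            · rw [Set.mem_singleton_iff] at hD; subst hD
              exact hD'mem.2
          exact hlt.not_subset hU'U''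
    · rw [hdxeq]; ext Di; simp [Set.diff_eq_empty, hU'def]
    · rw [hsdnxeq, hUeq]; ext Di; simp [Set.diff_eq_empty, hU'def]


end KBDDiag
end

section
/- Let ⟨K,B,P,N⟩_R be a DPI and D a set of minimal diagnoses w.r.t. it with |D| ≥ 2. Then the number c of canonical q-partitions w.r.t. D satisfies c = |{U_dx : ∅ ⊂ dx ⊂ D} \ {U_D}| and c ≥ |D|. -/
namespace KBDDiag

section Aux

variable {L : Type*} (d : DPI L)

lemma solKB_union (Di : Set L) : ((d.K \ Di) ∪ d.UP) ∪ d.B = d.Kstar Di := by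
  simp only [DPI.Kstar]
  ext x
  simp only [Set.mem_union]
  tauto

lemma isDiagnosis_iff' (Di : Set L) :
    d.IsDiagnosis Di ↔ Di ⊆ d.K ∧ ¬ d.Violates (d.Kstar Di) := by
  unfold DPI.IsDiagnosis DPI.IsSolutionKB DPI.Violates
  rw [solKB_union]
  constructor
  · rintro ⟨h1, h2, _h3, h4⟩
    refine ⟨h1, ?_⟩
    rintro (⟨r, hr, hnr⟩ | ⟨n, hn, he⟩)
    · exact hnr (h2 r hr)
    · exact h4 n hn he
  · rintro ⟨h1, h2⟩
    push_neg at h2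
    refine ⟨h1, h2.1, ?_, h2.2⟩
    intro p hp α hα
    apply d.entails_ext
    have : α ∈ d.UP := ⟨p, hp, hα⟩
    simp only [DPI.Kstar, Set.mem_union]
    tauto

lemma kstar_insert {Di : Set L} {α : L} (hα : α ∈ d.K) :
    d.Kstar (Di \ {α}) = d.Kstar Di ∪ {α} := by
  simp only [DPI.Kstar]
  ext x
  simp only [Set.mem_union, Set.mem_diff, Set.mem_singleton_iff]
  by_cases hx : x = α
  · subst hx; tauto
  · tauto

lemma not_entails_own {Di : Set L} {α : L} (hmin : d.IsMinDiagnosis Di) (hα : α ∈ Di) :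
    ¬ d.entails (d.Kstar Di) α := by
  intro hent
  have hDiK : Di ⊆ d.K := hmin.1.1
  have hnv : ¬ d.Violates (d.Kstar Di) := ((isDiagnosis_iff' d Di).1 hmin.1).2
  have hdiag : d.IsDiagnosis (Di \ {α}) := by
    rw [isDiagnosis_iff']
    refine ⟨fun x hx => hDiK hx.1, ?_⟩
    rw [kstar_insert d (hDiK hα)]
    rintro (⟨r, hr, hnr⟩ | ⟨n, hn, he⟩)
    · apply hnr
      apply d.sat_entailed r hr _ {α}
      · by_contra h
        exact hnv (Or.inl ⟨r, hr, h⟩)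
      · intro β hβ
        rw [Set.mem_singleton_iff] at hβ; subst hβ; exact hent
    · apply hnv
      right
      refine ⟨n, hn, fun β hβ => ?_⟩
      apply d.entails_idem _ {α} β
      · intro γ hγ
        rw [Set.mem_singleton_iff] at hγ; subst hγ; exact hent
      · exact he β hβ
  have hss : Di \ {α} ⊂ Di := by
    constructor
    · exact Set.diff_subset
    · intro hsub
      exact (hsub hα).2 rfl
  exact hmin.2 _ hss hdiag

lemma kstar_union_eq {Di Q : Set L} (hDi : Di ⊆ d.K) (hQ : Q ⊆ d.K) :
    d.Kstar Di ∪ Q = d.Kstar (Di \ Q) := by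
  simp only [DPI.Kstar]
  ext x
  have hxQ : x ∈ Q → x ∈ d.K := fun h => hQ h
  simp only [Set.mem_union, Set.mem_diff]
  by_cases hx : x ∈ Q <;> tauto

lemma entailsAll_iff {Di Q : Set L} (hmin : d.IsMinDiagnosis Di) (hQ : Q ⊆ d.K) :
    d.EntailsAll (d.Kstar Di) Q ↔ Di ∩ Q = ∅ := by
  constructor
  · intro h
    by_contra hne
    obtain ⟨α, hαD, hαQ⟩ := Set.nonempty_iff_ne_empty.2 hne
    exact not_entails_own d hmin hαD (h α hαQ)
  · intro h α hα
    apply d.entails_ext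
    have hαK : α ∈ d.K := hQ hα
    have hαD : α ∉ Di := fun hc => Set.eq_empty_iff_forall_notMem.1 h α ⟨hc, hα⟩
    simp only [DPI.Kstar, Set.mem_union]
    exact Or.inl (Or.inl ⟨hαK, hαD⟩)

variable {Ds : Set (Set L)}

lemma dxS_eq (hDs : ∀ Di ∈ Ds, d.IsMinDiagnosis Di) {Q : Set L} (hQ : Q ⊆ d.K) :
    d.dxS Ds Q = {Di ∈ Ds | Di ∩ Q = ∅} := by
  ext Di
  simp only [DPI.dxS, Set.mem_setOf_eq, Set.mem_sep_iff]
  exact and_congr_right fun hDi => entailsAll_iff d (hDs Di hDi) hQ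

lemma dnxS_eq (hDs : ∀ Di ∈ Ds, d.IsMinDiagnosis Di) {Q : Set L} (hQ : Q ⊆ d.K) :
    d.dnxS Ds Q = {Di ∈ Ds | (Di ∩ Q).Nonempty} := by
  ext Di
  simp only [DPI.dnxS, Set.mem_setOf_eq, Set.mem_sep_iff]
  exact and_congr_right fun hDi => violates_iff d (hDs Di hDi) hQ

lemma dzS_eq (hDs : ∀ Di ∈ Ds, d.IsMinDiagnosis Di) {Q : Set L} (hQ : Q ⊆ d.K) : d.dzS Ds Q = ∅ := by
  rw [Set.eq_empty_iff_forall_notMem]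
  intro Di hDi
  obtain ⟨h1, h2⟩ := hDi
  rw [dxS_eq d hDs hQ, dnxS_eq d hDs hQ] at h2
  simp only [Set.mem_union, Set.mem_setOf_eq] at h2
  push_neg at h2
  exact Set.not_nonempty_iff_eq_empty.2 (h2.2 h1) (h2.1 h1)

/-- Key: membership in the canonical query, intersection with a diagnosis. -/
lemma inter_Qcan_empty_iff (hDs : ∀ Di ∈ Ds, d.IsMinDiagnosis Di) {dx : Set (Set L)} (hne : dx.Nonempty) (hsub : dx ⊆ Ds)
    {Di : Set L} (hDi : Di ∈ Ds) :
    Di ∩ d.Qcan Ds dx = ∅ ↔ Di ⊆ ⋃₀ dx := by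
  obtain ⟨D0, hD0⟩ := hne
  have hDiK : Di ⊆ d.K := (hDs Di hDi).1.1
  constructor
  · intro h α hα
    by_contra hnu
    have hαK : α ∈ d.K := hDiK hα
    have hαU : α ∈ ⋃₀ Ds := ⟨Di, hDi, hα⟩
    have hαI : α ∉ ⋂₀ Ds := by
      intro hI
      exact hnu ⟨D0, hD0, hI D0 (hsub hD0)⟩
    exact Set.eq_empty_iff_forall_notMem.1 h α ⟨hα, ⟨hαK, hnu⟩, hαU, hαI⟩
  · intro h
    rw [Set.eq_empty_iff_forall_notMem]
    rintro α ⟨hαD, ⟨_, hnu⟩, _⟩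
    exact hnu (h hαD)

lemma Qcan_subset_K (dx : Set (Set L)) : d.Qcan Ds dx ⊆ d.K := fun _ h => h.1.1

/-- Characterization of canonical q-partitions. -/
lemma canonical_iff (hDs : ∀ Di ∈ Ds, d.IsMinDiagnosis Di) {dx dnx : Set (Set L)} :
    d.IsCanonicalQPartition Ds dx dnx ↔
      dx.Nonempty ∧ dx ⊂ Ds ∧ dnx = Ds \ dx ∧
        ∀ Di ∈ Ds, Di ⊆ ⋃₀ dx → Di ∈ dx := by
  constructor
  · rintro ⟨hu, hd, hne, hss, _hQne, hdx, hdnx, _hdz⟩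
    have hsub : dx ⊆ Ds := hss.1
    refine ⟨hne, hss, ?_, ?_⟩
    · ext Di
      constructor
      · intro h
        refine ⟨hu ▸ Set.mem_union_right _ h, fun hdx' => ?_⟩
        exact Set.eq_empty_iff_forall_notMem.1 hd Di ⟨hdx', h⟩
      · intro ⟨hDs', hndx⟩
        have : Di ∈ dx ∪ dnx := hu ▸ hDs'
        rcases (Set.mem_union _ _ _).mp this with h | h
        · exact absurd h hndx
        · exact h
    · intro Di hDi hsubU
      have : Di ∩ d.Qcan Ds dx = ∅ :=
        (inter_Qcan_empty_iff d hDs hne hsub hDi).2 hsubU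
      rw [← hdx, dxS_eq d hDs (Qcan_subset_K d dx)]
      exact ⟨hDi, this⟩
  · rintro ⟨hne, hss, hdnx, hclo⟩
    have hsub : dx ⊆ Ds := hss.1
    obtain ⟨Dj, hDjDs, hDjdx⟩ : ∃ Dj ∈ Ds, Dj ∉ dx := by
      by_contra h
      push_neg at h
      exact hss.2 h
    have hDjnu : ¬ Dj ⊆ ⋃₀ dx := fun h => hDjdx (hclo Dj hDjDs h)
    obtain ⟨α, hαDj, hαU⟩ : ∃ α ∈ Dj, α ∉ ⋃₀ dx := by
      by_contra h
      push_neg at h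
      exact hDjnu h
    obtain ⟨D0, hD0⟩ := id hne
    have hQne : (d.Qcan Ds dx).Nonempty := by
      refine ⟨α, ⟨(hDs Dj hDjDs).1.1 hαDj, hαU⟩, ⟨Dj, hDjDs, hαDj⟩, ?_⟩
      intro hI
      exact hαU ⟨D0, hD0, hI D0 (hsub hD0)⟩
    have hdxeq : d.dxS Ds (d.Qcan Ds dx) = dx := by
      rw [dxS_eq d hDs (Qcan_subset_K d dx)]
      ext Di
      simp only [Set.mem_sep_iff]
      constructor
      · rintro ⟨hDi, h⟩
        exact hclo Di hDi ((inter_Qcan_empty_iff d hDs hne hsub hDi).1 h)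
      · intro hDi
        refine ⟨hsub hDi, (inter_Qcan_empty_iff d hDs hne hsub (hsub hDi)).2 ?_⟩
        exact fun x hx => ⟨Di, hDi, hx⟩
    have hdnxeq : d.dnxS Ds (d.Qcan Ds dx) = dnx := by
      rw [dnxS_eq d hDs (Qcan_subset_K d dx), hdnx]
      ext Di
      simp only [Set.mem_sep_iff, Set.mem_diff]
      constructor
      · rintro ⟨hDi, h⟩
        refine ⟨hDi, fun hdx' => ?_⟩
        rw [(inter_Qcan_empty_iff d hDs hne hsub hDi).2
          (fun x hx => ⟨Di, hdx', hx⟩)] at h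
        exact Set.not_nonempty_empty h
      · rintro ⟨hDi, hndx⟩
        refine ⟨hDi, ?_⟩
        rcases Set.eq_empty_or_nonempty (Di ∩ d.Qcan Ds dx) with h | h
        · exact absurd (hclo Di hDi ((inter_Qcan_empty_iff d hDs hne hsub hDi).1 h)) hndx
        · exact h
    refine ⟨?_, ?_, hne, hss, hQne, hdxeq, hdnxeq, dzS_eq d hDs (Qcan_subset_K d dx)⟩
    · rw [hdnx]
      ext Di
      simp only [Set.mem_union, Set.mem_diff]
      constructor
      · rintro (h | h)
        · exact hsub h
        · exact h.1
      · intro h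
        by_cases hdx' : Di ∈ dx <;> tauto
    · rw [hdnx]
      ext Di
      simp only [Set.mem_inter_iff, Set.mem_diff]
      constructor
      · rintro ⟨h1, _, h2⟩
        exact absurd h1 h2
      · exact fun h => h.elim

end Aux

/-- The number `c` of canonical q-partitions w.r.t. `Ds` (with `|Ds| ≥ 2`)
satisfies `c = |{U_dx : ∅ ⊂ dx ⊂ Ds} \ {U_Ds}|` and `c ≥ |Ds|`. -/
theorem statement15 {L : Type*} (d : DPI L) (Ds : Set (Set L))
    (hDs : ∀ Di ∈ Ds, d.IsMinDiagnosis Di) (hcard : 2 ≤ Ds.ncard) :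
    {p : Set (Set L) × Set (Set L) | d.IsCanonicalQPartition Ds p.1 p.2}.ncard
        = ({U : Set L | ∃ dxp : Set (Set L), dxp.Nonempty ∧ dxp ⊂ Ds ∧ U = ⋃₀ dxp}
            \ {⋃₀ Ds}).ncard ∧
    Ds.ncard ≤
      {p : Set (Set L) × Set (Set L) | d.IsCanonicalQPartition Ds p.1 p.2}.ncard := by
  set CQP := {p : Set (Set L) × Set (Set L) | d.IsCanonicalQPartition Ds p.1 p.2} with hCQP
  set RHS := ({U : Set L | ∃ dxp : Set (Set L), dxp.Nonempty ∧ dxp ⊂ Ds ∧ U = ⋃₀ dxp}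
      \ {⋃₀ Ds}) with hRHS
  have hDsK : ∀ Di ∈ Ds, Di ⊆ d.K := fun Di hDi => (hDs Di hDi).1.1
  have hDsFin : Ds.Finite :=
    Set.Finite.subset d.K_finite.finite_subsets (fun Di hDi => hDsK Di hDi)
  -- characterization of membership in CQP
  have hmem : ∀ p : Set (Set L) × Set (Set L), p ∈ CQP ↔
      p.1.Nonempty ∧ p.1 ⊂ Ds ∧ p.2 = Ds \ p.1 ∧
        ∀ Di ∈ Ds, Di ⊆ ⋃₀ p.1 → Di ∈ p.1 := by
    intro p
    exact canonical_iff d hDs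
  -- for canonical partitions, dx is determined by its union
  have hdet : ∀ p ∈ CQP, p.1 = {Di ∈ Ds | Di ⊆ ⋃₀ p.1} := by
    intro p hp
    obtain ⟨hne, hss, _, hclo⟩ := (hmem p).1 hp
    ext Di
    simp only [Set.mem_sep_iff]
    constructor
    · intro h
      exact ⟨hss.1 h, fun x hx => ⟨Di, h, hx⟩⟩
    · rintro ⟨h1, h2⟩
      exact hclo Di h1 h2
  -- injectivity of union map on CQP
  have hinj : Set.InjOn (fun p : Set (Set L) × Set (Set L) => ⋃₀ p.1) CQP := by
    intro p hp q hq huv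
    have h1 : p.1 = q.1 := by
      rw [hdet p hp, hdet q hq]
      simp only at huv
      rw [huv]
    have h2 : p.2 = q.2 := by
      rw [((hmem p).1 hp).2.2.1, ((hmem q).1 hq).2.2.1, h1]
    exact Prod.ext h1 h2
  -- image of the union map
  have himg : (fun p : Set (Set L) × Set (Set L) => ⋃₀ p.1) '' CQP = RHS := by
    ext U
    simp only [Set.mem_image, hRHS, Set.mem_diff, Set.mem_setOf_eq,
      Set.mem_singleton_iff]
    constructor
    · rintro ⟨p, hp, rfl⟩
      obtain ⟨hne, hss, _, hclo⟩ := (hmem p).1 hp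
      refine ⟨⟨p.1, hne, hss, rfl⟩, ?_⟩
      intro hU
      obtain ⟨Dj, hDjDs, hDjdx⟩ : ∃ Dj ∈ Ds, Dj ∉ p.1 := by
        by_contra h
        push_neg at h
        exact hss.2 h
      exact hDjdx (hclo Dj hDjDs (hU ▸ fun x hx => ⟨Dj, hDjDs, hx⟩))
    · rintro ⟨⟨dx0, hne0, hss0, rfl⟩, hUne⟩
      set dx := {Di ∈ Ds | Di ⊆ ⋃₀ dx0} with hdx
      have hsubU : ⋃₀ dx ⊆ ⋃₀ dx0 := by
        rintro x ⟨Di, hDi, hx⟩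
        exact hDi.2 hx
      have hUsub : ⋃₀ dx0 ⊆ ⋃₀ dx := by
        rintro x ⟨Di, hDi, hx⟩
        exact ⟨Di, ⟨hss0.1 hDi, fun y hy => ⟨Di, hDi, hy⟩⟩, hx⟩
      have hUeq : ⋃₀ dx = ⋃₀ dx0 := Set.Subset.antisymm hsubU hUsub
      have hdxne : dx.Nonempty := by
        obtain ⟨D0, hD0⟩ := hne0
        exact ⟨D0, hss0.1 hD0, fun x hx => ⟨D0, hD0, hx⟩⟩
      have hdxss : dx ⊂ Ds := by
        refine ⟨fun Di hDi => hDi.1, ?_⟩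
        intro hall
        apply hUne
        apply Set.Subset.antisymm
        · rintro x ⟨Di, hDi, hx⟩
          exact ⟨Di, hss0.1 hDi, hx⟩
        · rintro x ⟨Di, hDi, hx⟩
          exact (hall hDi).2 hx
      refine ⟨(dx, Ds \ dx), (hmem _).2 ⟨hdxne, hdxss, rfl, ?_⟩, hUeq⟩
      intro Di hDi hsub
      exact ⟨hDi, fun x hx => hsubU (hsub hx)⟩
  constructor
  · rw [← himg]
    exact (Set.ncard_image_of_injOn hinj).symm
  · -- CQP is finite
    have hCQPfin : CQP.Finite := by
      apply Set.Finite.subset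
        (Set.Finite.image (fun t => (t, Ds \ t)) hDsFin.finite_subsets)
      intro p hp
      obtain ⟨_, hss, hp2, _⟩ := (hmem p).1 hp
      refine ⟨p.1, hss.1, ?_⟩
      show (p.1, Ds \ p.1) = p
      exact Prod.ext rfl hp2.symm
    -- map Di ↦ ({Di}, Ds \ {Di}) into CQP
    have hg : ∀ Di ∈ Ds, (({Di} : Set (Set L)), Ds \ {Di}) ∈ CQP := by
      intro Di hDi
      refine (hmem _).2 ⟨⟨Di, rfl⟩, ⟨Set.singleton_subset_iff.2 hDi, ?_⟩, rfl, ?_⟩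
      · intro hall
        obtain ⟨a, b, ha, hb, hab⟩ :=
          (Set.one_lt_ncard_iff hDsFin).1 (lt_of_lt_of_le one_lt_two hcard)
        have ha' : a = Di := hall ha
        have hb' : b = Di := hall hb
        exact hab (ha'.trans hb'.symm)
      · intro Dj hDj hsub
        rw [Set.sUnion_singleton] at hsub
        rw [Set.mem_singleton_iff]
        by_contra hne
        have hss : Dj ⊂ Di := ⟨hsub, fun h => hne (Set.Subset.antisymm hsub h)⟩
        exact (hDs Di hDi).2 Dj hss (hDs Dj hDj).1
    have hginj : Set.InjOn (fun Di => (({Di} : Set (Set L)), Ds \ {Di})) Ds := by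
      intro a _ b _ h
      have := congrArg Prod.fst h
      simpa using this
    calc Ds.ncard
        = ((fun Di => (({Di} : Set (Set L)), Ds \ {Di})) '' Ds).ncard :=
          (Set.ncard_image_of_injOn hginj).symm
      _ ≤ CQP.ncard := by
          apply Set.ncard_le_ncard _ hCQPfin
          rintro p ⟨Di, hDi, rfl⟩
          exact hg Di hDi

end KBDDiag
end
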